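/- arXiv:2407.12147 — 10 statements merged into one kernel-verified Lean document; each statement's English description precedes it below -/
import Mathlib

section
/- In a permutation graph (realized as a point set with the quadrant adjacency), for any two vertices u, v at distance d ≥ 2, there exists a shortest path u = q_0, q_1, ..., q_d = v such that every internal vertex q_1, ..., q_{d-1} lies on the top or bottom boundary, and consecutive internal vertices lie on alternating boundaries. -/
/-- `inTL p q` : point `p` lies in the top-left quadrant of point `q`. -/
def inTL (p q : ℝ × ℝ) : Prop := p.1 < q.1 ∧ q.2 < p.2

/-- The permutation graph of a point set `S`: two points are adjacent iff both belong
to `S` and one lies in the top-left quadrant of the other. -/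
def pGraph (S : Finset (ℝ × ℝ)) : SimpleGraph (ℝ × ℝ) where
  Adj p q := p ∈ S ∧ q ∈ S ∧ (inTL p q ∨ inTL q p)
  symm := ⟨by rintro p q ⟨hp, hq, h⟩; exact ⟨hq, hp, h.symm⟩⟩
  loopless := ⟨by rintro p ⟨-, -, ⟨h, _⟩ | ⟨h, _⟩⟩ <;> exact lt_irrefl _ h⟩

/-- `p` is on the top boundary of `S`: its top-left quadrant contains no point of `S`. -/
def onTop (S : Finset (ℝ × ℝ)) (p : ℝ × ℝ) : Prop := ∀ q ∈ S, ¬ inTL q p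

/-- `p` is on the bottom boundary of `S`: its bottom-right quadrant contains no point of `S`. -/
def onBottom (S : Finset (ℝ × ℝ)) (p : ℝ × ℝ) : Prop := ∀ q ∈ S, ¬ inTL p q

/-- All points of `S` have pairwise distinct x-coordinates and pairwise distinct
y-coordinates. -/
def DistinctCoords (S : Finset (ℝ × ℝ)) : Prop :=
  ∀ p ∈ S, ∀ q ∈ S, p ≠ q → p.1 ≠ q.1 ∧ p.2 ≠ q.2

lemma pushTop (S : Finset (ℝ × ℝ)) :
    ∀ p : ℝ × ℝ, ∃ q : ℝ × ℝ, p ∈ S → q ∈ S ∧ q.1 ≤ p.1 ∧ p.2 ≤ q.2 ∧ onTop S q := by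
  intro p
  by_cases hp : p ∈ S
  · obtain ⟨q, hqT, hq⟩ := (S.filter fun s => s.1 ≤ p.1 ∧ p.2 ≤ s.2).exists_min_image
      (fun s => s.1) ⟨p, by simp [hp]⟩
    rw [Finset.mem_filter] at hqT
    refine ⟨q, fun _ => ⟨hqT.1, hqT.2.1, hqT.2.2, ?_⟩⟩
    intro t ht htl
    have := hq t (Finset.mem_filter.mpr ⟨ht, le_trans htl.1.le hqT.2.1,
      le_trans hqT.2.2 htl.2.le⟩)
    exact absurd htl.1 (not_lt.mpr this)
  · exact ⟨p, fun h => absurd h hp⟩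

lemma pushBot (S : Finset (ℝ × ℝ)) :
    ∀ p : ℝ × ℝ, ∃ q : ℝ × ℝ, p ∈ S → q ∈ S ∧ p.1 ≤ q.1 ∧ q.2 ≤ p.2 ∧ onBottom S q := by
  intro p
  by_cases hp : p ∈ S
  · obtain ⟨q, hqT, hq⟩ := (S.filter fun s => p.1 ≤ s.1 ∧ s.2 ≤ p.2).exists_max_image
      (fun s => s.1) ⟨p, by simp [hp]⟩
    rw [Finset.mem_filter] at hqT
    refine ⟨q, fun _ => ⟨hqT.1, hqT.2.1, hqT.2.2, ?_⟩⟩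
    intro t ht htl
    have := hq t (Finset.mem_filter.mpr ⟨ht, le_trans hqT.2.1 htl.1.le,
      le_trans htl.2.le hqT.2.2⟩)
    exact absurd htl.1 (not_lt.mpr this)
  · exact ⟨p, fun h => absurd h hp⟩

lemma length_drop_le {V : Type*} {G : SimpleGraph V} {a b : V} (p : G.Walk a b) (n : ℕ) :
    (p.drop n).length ≤ p.length - n := by
  induction p generalizing n with
  | nil => cases n <;> simp [SimpleGraph.Walk.drop]
  | cons h q ih =>
    cases n with
    | zero => simp [SimpleGraph.Walk.drop]
    | succ n =>
      simp only [SimpleGraph.Walk.drop, SimpleGraph.Walk.length_copy,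
        SimpleGraph.Walk.length_cons]
      exact le_trans (ih n) (by omega)

lemma walk_to {V : Type*} {G : SimpleGraph V} {a b : V} (p : G.Walk a b) (i : ℕ) :
    ∃ w : G.Walk a (p.getVert i), w.length ≤ i := by
  induction i with
  | zero => exact ⟨SimpleGraph.Walk.nil.copy rfl (p.getVert_zero).symm, by simp⟩
  | succ i ih =>
    obtain ⟨w, hw⟩ := ih
    by_cases h : i < p.length
    · exact ⟨w.concat (p.adj_getVert_succ h), by
        rw [SimpleGraph.Walk.length_concat]; omega⟩
    · have h1 : p.getVert i = b := p.getVert_of_length_le (le_of_not_gt h)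
      have h2 : p.getVert (i+1) = b := p.getVert_of_length_le (by omega)
      exact ⟨w.copy rfl (h1.trans h2.symm), by rw [SimpleGraph.Walk.length_copy]; omega⟩
/-- for any two vertices `u, v` at distance `d ≥ 2` in a permutation
graph, there is a shortest path `u = q 0, q 1, …, q d = v` whose internal vertices all
lie on the top or bottom boundary, and consecutive internal vertices lie on
alternating boundaries. -/
theorem stmt4 (S : Finset (ℝ × ℝ)) (hS : DistinctCoords S)
    (u v : ℝ × ℝ) (hu : u ∈ S) (hv : v ∈ S)
    (hreach : (pGraph S).Reachable u v)
    (d : ℕ) (hd : (pGraph S).dist u v = d) (h2 : 2 ≤ d) :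
    ∃ q : ℕ → ℝ × ℝ, q 0 = u ∧ q d = v ∧
      (∀ i < d, (pGraph S).Adj (q i) (q (i + 1))) ∧
      (∀ i, 0 < i → i < d → onTop S (q i) ∨ onBottom S (q i)) ∧
      (∀ i, 0 < i → i + 1 < d →
        (onTop S (q i) → onBottom S (q (i + 1))) ∧
        (onBottom S (q i) → onTop S (q (i + 1)))) := by
  classical
  choose T hT using pushTop S
  choose B hB using pushBot S
  obtain ⟨p, hp⟩ := SimpleGraph.exists_walk_of_dist_ne_zero
    (G := pGraph S) (u := u) (v := v) (by omega)
  rw [hd] at hp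
  set g : ℕ → ℝ × ℝ := p.getVert with hgdef
  have hg0 : g 0 = u := p.getVert_zero
  have hgd : g d = v := by rw [← hp]; exact p.getVert_length
  have hadjg : ∀ i < d, (pGraph S).Adj (g i) (g (i+1)) := by
    intro i hi
    exact p.adj_getVert_succ (by rw [hp]; exact hi)
  have hgS : ∀ i ≤ d, g i ∈ S := by
    intro i hi
    rcases eq_or_lt_of_le hi with rfl | hlt
    · rw [hgd]; exact hv
    · exact (hadjg i hlt).1
  have hnadj : ∀ i j, i + 2 ≤ j → j ≤ d → ¬ (pGraph S).Adj (g i) (g j) := by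
    intro i j hij hj hadj
    obtain ⟨w1, hw1⟩ := walk_to p i
    have hw2 : (p.drop j).length ≤ d - j := by
      have := length_drop_le p j; rwa [hp] at this
    have hle : (pGraph S).dist u v ≤ (w1.append ((p.drop j).cons hadj)).length :=
      SimpleGraph.dist_le _
    rw [SimpleGraph.Walk.length_append, SimpleGraph.Walk.length_cons] at hle
    omega
  have hne2 : ∀ i j, i < j → j ≤ d → g i ≠ g j := by
    intro i j hij hj heq
    obtain ⟨w1, hw1⟩ := walk_to p i
    have hw2 : (p.drop j).length ≤ d - j := by
      have := length_drop_le p j; rwa [hp] at this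
    have hle : (pGraph S).dist u v ≤ (w1.append ((p.drop j).copy heq.symm rfl)).length :=
      SimpleGraph.dist_le _
    rw [SimpleGraph.Walk.length_append, SimpleGraph.Walk.length_copy] at hle
    omega
  have hdir : ∀ i < d, inTL (g i) (g (i+1)) ∨ inTL (g (i+1)) (g i) :=
    fun i hi => (hadjg i hi).2.2
  have hcmp : ∀ a b : ℝ × ℝ, a ∈ S → b ∈ S → a ≠ b → ¬ (pGraph S).Adj a b →
      (a.1 < b.1 ∧ a.2 < b.2) ∨ (b.1 < a.1 ∧ b.2 < a.2) := by
    intro a b ha hb hne hnab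
    have h1 := hS a ha b hb hne
    have hn1 : ¬ inTL a b := fun h => hnab ⟨ha, hb, Or.inl h⟩
    have hn2 : ¬ inTL b a := fun h => hnab ⟨ha, hb, Or.inr h⟩
    unfold inTL at hn1 hn2
    rcases lt_or_gt_of_ne h1.1 with h | h
    · left
      refine ⟨h, lt_of_le_of_ne ?_ h1.2⟩
      by_contra hc
      exact hn1 ⟨h, by linarith [not_le.mp hc]⟩
    · right
      refine ⟨h, lt_of_le_of_ne ?_ h1.2.symm⟩
      by_contra hc
      exact hn2 ⟨h, by linarith [not_le.mp hc]⟩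
  have hcons : ∀ i, i + 2 ≤ d →
      (inTL (g (i+1)) (g (i+2)) ↔ inTL (g (i+1)) (g i)) := by
    intro i hi
    have hc := hcmp (g i) (g (i+2)) (hgS i (by omega)) (hgS (i+2) hi)
      (hne2 i (i+2) (by omega) hi) (hnadj i (i+2) le_rfl hi)
    have h1 := hdir i (by omega)
    have h2 := hdir (i+1) (by omega)
    constructor
    · intro h
      rcases h1 with hab | hba
      · exfalso
        obtain ⟨hx, hy⟩ := h
        obtain ⟨hx2, hy2⟩ := hab
        rcases hc with ⟨h3, h4⟩ | ⟨h3, h4⟩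
        · linarith
        · linarith
      · exact hba
    · intro h
      rcases h2 with hbc | hcb
      · exact hbc
      · exfalso
        obtain ⟨hx, hy⟩ := h
        obtain ⟨hx2, hy2⟩ := hcb
        rcases hc with ⟨h3, h4⟩ | ⟨h3, h4⟩
        · linarith
        · linarith
  have hnotboth : ∀ a b : ℝ × ℝ, inTL a b → inTL b a → False := by
    intro a b hx hy; exact absurd hx.1 (not_lt.mpr hy.1.le)
  set Q : ℕ → ℝ × ℝ := fun i => if i = 0 then u else if i < d then
      (if inTL (g i) (g (i+1)) then T (g i) else B (g i)) else v with hQ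
  have hQ0 : Q 0 = u := by simp [hQ]
  have hQv : ∀ i, d ≤ i → Q i = v := by
    intro i hi
    simp only [hQ]
    rw [if_neg (show ¬ i = 0 by omega), if_neg (show ¬ i < d by omega)]
  have hQint : ∀ i, 0 < i → i < d →
      Q i = if inTL (g i) (g (i+1)) then T (g i) else B (g i) := by
    intro i h0 hid
    simp only [hQ]
    rw [if_neg (show ¬ i = 0 by omega), if_pos hid]
  refine ⟨Q, hQ0, hQv d le_rfl, ?_, ?_, ?_⟩
  · -- adjacency
    intro i hi
    rcases Nat.eq_zero_or_pos i with rfl | hipos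
    · rw [hQ0, hQint 1 one_pos (by omega)]
      have hmem1 : g 1 ∈ S := hgS 1 (by omega)
      by_cases hN : inTL (g 1) (g (1+1))
      · rw [if_pos hN]
        have h10 : inTL (g 1) (g 0) := (hcons 0 (by omega)).mp hN
        refine ⟨hu, (hT _ hmem1).1, Or.inr ⟨?_, ?_⟩⟩
        · exact lt_of_le_of_lt (hT _ hmem1).2.1 (hg0 ▸ h10.1)
        · exact lt_of_lt_of_le (hg0 ▸ h10.2) (hT _ hmem1).2.2.1
      · rw [if_neg hN]
        have h01 : inTL (g 0) (g 1) := by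
          rcases hdir 0 (by omega) with h | h
          · exact h
          · exact absurd ((hcons 0 (by omega)).mpr h) hN
        refine ⟨hu, (hB _ hmem1).1, Or.inl ⟨?_, ?_⟩⟩
        · exact lt_of_lt_of_le (hg0 ▸ h01.1) (hB _ hmem1).2.1
        · exact lt_of_le_of_lt (hB _ hmem1).2.2.1 (hg0 ▸ h01.2)
    · rw [hQint i hipos hi]
      have hmemi : g i ∈ S := hgS i hi.le
      by_cases hlast : i + 1 = d
      · rw [hQv (i+1) (by omega)]
        have hv' : g (i+1) = v := by rw [hlast]; exact hgd
        by_cases hN : inTL (g i) (g (i+1))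
        · rw [if_pos hN]
          refine ⟨(hT _ hmemi).1, hv, Or.inl ⟨?_, ?_⟩⟩
          · exact lt_of_le_of_lt (hT _ hmemi).2.1 (hv' ▸ hN.1)
          · exact lt_of_lt_of_le (hv' ▸ hN.2) (hT _ hmemi).2.2.1
        · rw [if_neg hN]
          have h' : inTL (g (i+1)) (g i) := (hdir i hi).resolve_left hN
          refine ⟨(hB _ hmemi).1, hv, Or.inr ⟨?_, ?_⟩⟩
          · exact lt_of_lt_of_le (hv' ▸ h'.1) (hB _ hmemi).2.1
          · exact lt_of_le_of_lt (hB _ hmemi).2.2.1 (hv' ▸ h'.2)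
      · rw [hQint (i+1) (by omega) (by omega)]
        have hmemi1 : g (i+1) ∈ S := hgS (i+1) (by omega)
        by_cases hN : inTL (g i) (g (i+1))
        · rw [if_pos hN]
          have hN' : ¬ inTL (g (i+1)) (g (i+1+1)) := by
            intro h
            exact hnotboth _ _ hN ((hcons i (by omega)).mp h)
          rw [if_neg hN']
          refine ⟨(hT _ hmemi).1, (hB _ hmemi1).1, Or.inl ⟨?_, ?_⟩⟩
          · exact lt_of_le_of_lt (hT _ hmemi).2.1 (lt_of_lt_of_le hN.1 (hB _ hmemi1).2.1)
          · exact lt_of_le_of_lt (hB _ hmemi1).2.2.1 (lt_of_lt_of_le hN.2 (hT _ hmemi).2.2.1)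
        · rw [if_neg hN]
          have h' : inTL (g (i+1)) (g i) := (hdir i hi).resolve_left hN
          have hN' : inTL (g (i+1)) (g (i+1+1)) := (hcons i (by omega)).mpr h'
          rw [if_pos hN']
          refine ⟨(hB _ hmemi).1, (hT _ hmemi1).1, Or.inr ⟨?_, ?_⟩⟩
          · exact lt_of_le_of_lt (hT _ hmemi1).2.1 (lt_of_lt_of_le h'.1 (hB _ hmemi).2.1)
          · exact lt_of_le_of_lt (hB _ hmemi).2.2.1 (lt_of_lt_of_le h'.2 (hT _ hmemi1).2.2.1)
  · intro i h0 hid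
    rw [hQint i h0 hid]
    have hmemi : g i ∈ S := hgS i hid.le
    by_cases hN : inTL (g i) (g (i+1))
    · rw [if_pos hN]; exact Or.inl (hT _ hmemi).2.2.2
    · rw [if_neg hN]; exact Or.inr (hB _ hmemi).2.2.2
  · intro i h0 h1
    rw [hQint i h0 (by omega), hQint (i+1) (by omega) h1]
    have hmemi : g i ∈ S := hgS i (by omega)
    have hmemi1 : g (i+1) ∈ S := hgS (i+1) (by omega)
    by_cases hN : inTL (g i) (g (i+1))
    · have hN' : ¬ inTL (g (i+1)) (g (i+1+1)) := by
        intro h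
        exact hnotboth _ _ hN ((hcons i (by omega)).mp h)
      rw [if_pos hN, if_neg hN']
      constructor
      · intro _; exact (hB _ hmemi1).2.2.2
      · intro hbot
        exfalso
        refine hbot (B (g (i+1))) (hB _ hmemi1).1 ⟨?_, ?_⟩
        · exact lt_of_le_of_lt (hT _ hmemi).2.1 (lt_of_lt_of_le hN.1 (hB _ hmemi1).2.1)
        · exact lt_of_le_of_lt (hB _ hmemi1).2.2.1 (lt_of_lt_of_le hN.2 (hT _ hmemi).2.2.1)
    · have h' : inTL (g (i+1)) (g i) := (hdir i (by omega)).resolve_left hN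
      have hN' : inTL (g (i+1)) (g (i+1+1)) := (hcons i (by omega)).mpr h'
      rw [if_neg hN, if_pos hN']
      constructor
      · intro htop
        exfalso
        refine htop (T (g (i+1))) (hT _ hmemi1).1 ⟨?_, ?_⟩
        · exact lt_of_le_of_lt (hT _ hmemi1).2.1 (lt_of_lt_of_le h'.1 (hB _ hmemi).2.1)
        · exact lt_of_le_of_lt (hB _ hmemi).2.2.1 (lt_of_lt_of_le h'.2 (hT _ hmemi1).2.2.1)
      · intro _; exact (hT _ hmemi1).2.2.2
end

section
/- With layers defined as distances from the leftmost point p_0, for any two boundary points u, v with L(u) ≤ L(v), the distance d(u,v) equals either L(v) − L(u) or L(v) − L(u) + 2. -/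
namespace Stmt7

variable (S : Finset (ℝ × ℝ)) (p₀ : ℝ × ℝ)

noncomputable def XofY (t : ℝ) : ℝ :=
  ((insert p₀ (S.filter (fun q => q.2 < t))).image Prod.fst).max' (by simp)

noncomputable def YofX (s : ℝ) : ℝ :=
  ((insert p₀ (S.filter (fun q => q.1 < s))).image Prod.snd).max' (by simp)

noncomputable def Yt : ℕ → ℝ
  | 0 => p₀.2
  | k+1 => YofX S p₀ (XofY S p₀ (Yt k))

noncomputable def Xt (k : ℕ) : ℝ := XofY S p₀ (Yt S p₀ k)

lemma Yt_succ (k : ℕ) : Yt S p₀ (k+1) = YofX S p₀ (Xt S p₀ k) := rfl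

lemma le_XofY {q : ℝ × ℝ} {t : ℝ} (hq : q ∈ S) (h : q.2 < t) : q.1 ≤ XofY S p₀ t :=
  Finset.le_max' _ _ (Finset.mem_image.2 ⟨q, Finset.mem_insert_of_mem (Finset.mem_filter.2 ⟨hq, h⟩), rfl⟩)

lemma p0_le_XofY (t : ℝ) : p₀.1 ≤ XofY S p₀ t :=
  Finset.le_max' _ _ (Finset.mem_image.2 ⟨p₀, Finset.mem_insert_self _ _, rfl⟩)

lemma le_YofX {q : ℝ × ℝ} {s : ℝ} (hq : q ∈ S) (h : q.1 < s) : q.2 ≤ YofX S p₀ s :=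
  Finset.le_max' _ _ (Finset.mem_image.2 ⟨q, Finset.mem_insert_of_mem (Finset.mem_filter.2 ⟨hq, h⟩), rfl⟩)

lemma p0_le_YofX (s : ℝ) : p₀.2 ≤ YofX S p₀ s :=
  Finset.le_max' _ _ (Finset.mem_image.2 ⟨p₀, Finset.mem_insert_self _ _, rfl⟩)

lemma XofY_attain (t : ℝ) :
    XofY S p₀ t = p₀.1 ∨ ∃ m, m ∈ S ∧ m.2 < t ∧ m.1 = XofY S p₀ t := by
  have h := Finset.max'_mem _ (show (((insert p₀ (S.filter (fun q => q.2 < t))).image Prod.fst)).Nonempty by simp)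
  rw [Finset.mem_image] at h
  obtain ⟨q, hq, hq1⟩ := h
  rcases Finset.mem_insert.1 hq with rfl | hq
  · exact Or.inl hq1.symm
  · rw [Finset.mem_filter] at hq
    exact Or.inr ⟨q, hq.1, hq.2, hq1⟩

lemma YofX_attain (s : ℝ) :
    YofX S p₀ s = p₀.2 ∨ ∃ m, m ∈ S ∧ m.1 < s ∧ m.2 = YofX S p₀ s := by
  have h := Finset.max'_mem _ (show (((insert p₀ (S.filter (fun q => q.1 < s))).image Prod.snd)).Nonempty by simp)
  rw [Finset.mem_image] at h
  obtain ⟨q, hq, hq1⟩ := h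
  rcases Finset.mem_insert.1 hq with rfl | hq
  · exact Or.inl hq1.symm
  · rw [Finset.mem_filter] at hq
    exact Or.inr ⟨q, hq.1, hq.2, hq1⟩

lemma XofY_mono {t t' : ℝ} (h : t ≤ t') : XofY S p₀ t ≤ XofY S p₀ t' := by
  apply Finset.max'_le
  intro b hb
  rw [Finset.mem_image] at hb
  obtain ⟨q, hq, rfl⟩ := hb
  rcases Finset.mem_insert.1 hq with hq' | hq
  · rw [hq']; exact p0_le_XofY S p₀ t'
  · rw [Finset.mem_filter] at hq
    exact le_XofY S p₀ hq.1 (lt_of_lt_of_le hq.2 h)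

lemma YofX_mono {s s' : ℝ} (h : s ≤ s') : YofX S p₀ s ≤ YofX S p₀ s' := by
  apply Finset.max'_le
  intro b hb
  rw [Finset.mem_image] at hb
  obtain ⟨q, hq, rfl⟩ := hb
  rcases Finset.mem_insert.1 hq with hq' | hq
  · rw [hq']; exact p0_le_YofX S p₀ s'
  · rw [Finset.mem_filter] at hq
    exact le_YofX S p₀ hq.1 (lt_of_lt_of_le hq.2 h)

lemma Yt_mono_succ (k : ℕ) : Yt S p₀ k ≤ Yt S p₀ (k+1) := by
  induction k with
  | zero => exact p0_le_YofX S p₀ _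
  | succ k ih => exact YofX_mono S p₀ (XofY_mono S p₀ ih)

lemma Yt_mono {k l : ℕ} (h : k ≤ l) : Yt S p₀ k ≤ Yt S p₀ l :=
  monotone_nat_of_le_succ (Yt_mono_succ S p₀) h

lemma Xt_mono {k l : ℕ} (h : k ≤ l) : Xt S p₀ k ≤ Xt S p₀ l :=
  XofY_mono S p₀ (Yt_mono S p₀ h)

lemma Yt0_le (k : ℕ) : p₀.2 ≤ Yt S p₀ k := Yt_mono S p₀ (Nat.zero_le k)

def Pred (n : ℕ) (w : ℝ × ℝ) : Prop :=
  (∃ k, n = 2*k+1 ∧ w.2 < Yt S p₀ k) ∨ (∃ k, n = 2*k+2 ∧ w.1 < Xt S p₀ k)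

lemma not_pred_zero (w : ℝ × ℝ) : ¬ Pred S p₀ 0 w := by
  rintro (⟨k, hk, -⟩ | ⟨k, hk, -⟩) <;> omega

open Classical in
noncomputable def ell (w : ℝ × ℝ) : ℕ :=
  if w = p₀ then 0 else if h : ∃ n, Pred S p₀ n w then Nat.find h else 0

lemma ell_p0 : ell S p₀ p₀ = 0 := by simp [ell]

lemma ell_le {w : ℝ × ℝ} {n : ℕ} (h : Pred S p₀ n w) : ell S p₀ w ≤ n := by
  classical
  unfold ell
  split
  · omega
  · rw [dif_pos ⟨n, h⟩]
    exact Nat.find_le h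

lemma ell_spec {w : ℝ × ℝ} (hw : w ≠ p₀) (hex : ∃ n, Pred S p₀ n w) :
    Pred S p₀ (ell S p₀ w) w ∧ ∀ j, j < ell S p₀ w → ¬ Pred S p₀ j w := by
  classical
  unfold ell
  rw [if_neg hw, dif_pos hex]
  exact ⟨Nat.find_spec hex, fun j hj => Nat.find_min hex hj⟩


lemma pred_p0_adj (hleft : ∀ q ∈ S, q ≠ p₀ → p₀.1 < q.1) {b : ℝ × ℝ}
    (hab : (pGraph S).Adj p₀ b) : Pred S p₀ 1 b := by
  obtain ⟨hp, hb, hor⟩ := hab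
  have hbne : b ≠ p₀ := by rintro rfl; exact (pGraph S).loopless.irrefl b ⟨hp, hb, hor⟩
  rcases hor with h | h
  · exact Or.inl ⟨0, rfl, h.2⟩
  · exact absurd (hleft b hb hbne) (not_lt.2 h.1.le)

lemma pred_adj {a b : ℝ × ℝ} {n : ℕ} (hab : (pGraph S).Adj a b) (h : Pred S p₀ n a) :
    ∃ m, m ≤ n + 1 ∧ Pred S p₀ m b := by
  obtain ⟨haS, hbS, hor⟩ := hab
  rcases h with ⟨k, rfl, hy⟩ | ⟨k, rfl, hx⟩
  · have hxa : a.1 ≤ Xt S p₀ k := le_XofY S p₀ haS hy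
    rcases hor with ⟨-, h2⟩ | ⟨h1, -⟩
    · exact ⟨2*k+1, by omega, Or.inl ⟨k, rfl, h2.trans hy⟩⟩
    · exact ⟨2*k+2, by omega, Or.inr ⟨k, rfl, lt_of_lt_of_le h1 hxa⟩⟩
  · have hya : a.2 ≤ Yt S p₀ (k+1) := by rw [Yt_succ]; exact le_YofX S p₀ haS hx
    rcases hor with ⟨-, h2⟩ | ⟨h1, -⟩
    · exact ⟨2*(k+1)+1, by omega, Or.inl ⟨k+1, rfl, lt_of_lt_of_le h2 hya⟩⟩
    · exact ⟨2*k+2, by omega, Or.inr ⟨k, rfl, lt_trans h1 hx⟩⟩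

lemma pred_of_walk (hleft : ∀ q ∈ S, q ≠ p₀ → p₀.1 < q.1) :
    ∀ {a b : ℝ × ℝ}, (pGraph S).Walk a b → (a = p₀ ∨ ∃ n, Pred S p₀ n a) →
      (b = p₀ ∨ ∃ n, Pred S p₀ n b) := by
  intro a b W
  induction W with
  | nil => exact id
  | @cons x y z h q ih =>
    intro ha
    apply ih
    rcases ha with hx | ⟨n, hn⟩
    · exact Or.inr ⟨1, pred_p0_adj S p₀ hleft (hx ▸ h)⟩
    · obtain ⟨m, -, hm⟩ := pred_adj S p₀ h hn
      exact Or.inr ⟨m, hm⟩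

variable {S p₀} (hconn : ∀ p ∈ S, ∀ q ∈ S, (pGraph S).Reachable p q)
    (hp₀ : p₀ ∈ S) (hleft : ∀ q ∈ S, q ≠ p₀ → p₀.1 < q.1)

include hconn hp₀ hleft

lemma ell_exists {w : ℝ × ℝ} (hw : w ∈ S) (hwne : w ≠ p₀) : ∃ n, Pred S p₀ n w := by
  obtain ⟨W⟩ := hconn p₀ hp₀ w hw
  exact (pred_of_walk S p₀ hleft W (Or.inl rfl)).resolve_left hwne

lemma ell_ne_zero {w : ℝ × ℝ} (hw : w ∈ S) (hwne : w ≠ p₀) : ell S p₀ w ≠ 0 := by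
  intro h
  have := (ell_spec S p₀ hwne (ell_exists hconn hp₀ hleft hw hwne)).1
  rw [h] at this
  exact not_pred_zero S p₀ w this

lemma eq_p0_of_ell_eq_zero {w : ℝ × ℝ} (hw : w ∈ S) (h : ell S p₀ w = 0) : w = p₀ := by
  by_contra hne
  exact ell_ne_zero hconn hp₀ hleft hw hne h

lemma box_odd {w : ℝ × ℝ} {k : ℕ} (hw : w ∈ S) (h : ell S p₀ w = 2*k+1) :
    w.2 < Yt S p₀ k ∧ (1 ≤ k → Yt S p₀ (k-1) ≤ w.2 ∧ Xt S p₀ (k-1) ≤ w.1) := by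
  have hwne : w ≠ p₀ := by rintro rfl; rw [ell_p0] at h; omega
  obtain ⟨h1, h2⟩ := ell_spec S p₀ hwne (ell_exists hconn hp₀ hleft hw hwne)
  rw [h] at h1
  constructor
  · rcases h1 with ⟨k', hk', hy⟩ | ⟨k', hk', -⟩
    · have : k' = k := by omega
      rwa [this] at hy
    · omega
  · intro hk1
    constructor
    · have := h2 (2*(k-1)+1) (by omega)
      rw [Pred] at this
      push_neg at this
      exact this.1 (k-1) rfl
    · have := h2 (2*(k-1)+2) (by omega)
      rw [Pred] at this
      push_neg at this
      exact this.2 (k-1) rfl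

lemma box_even {w : ℝ × ℝ} {k : ℕ} (hw : w ∈ S) (h : ell S p₀ w = 2*k+2) :
    w.1 < Xt S p₀ k ∧ Yt S p₀ k ≤ w.2 ∧ (1 ≤ k → Xt S p₀ (k-1) ≤ w.1) := by
  have hwne : w ≠ p₀ := by rintro rfl; rw [ell_p0] at h; omega
  obtain ⟨h1, h2⟩ := ell_spec S p₀ hwne (ell_exists hconn hp₀ hleft hw hwne)
  rw [h] at h1
  refine ⟨?_, ?_, ?_⟩
  · rcases h1 with ⟨k', hk', -⟩ | ⟨k', hk', hx⟩
    · omega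
    · have : k' = k := by omega
      rwa [this] at hx
  · have := h2 (2*k+1) (by omega)
    rw [Pred] at this
    push_neg at this
    exact this.1 k rfl
  · intro hk1
    have := h2 (2*(k-1)+2) (by omega)
    rw [Pred] at this
    push_neg at this
    exact this.2 (k-1) rfl

lemma ell_adj {a b : ℝ × ℝ} (hab : (pGraph S).Adj a b) :
    ell S p₀ b ≤ ell S p₀ a + 1 := by
  by_cases ha : a = p₀
  · rw [ha, ell_p0]
    exact ell_le S p₀ (pred_p0_adj S p₀ hleft (ha ▸ hab))
  · have h1 := (ell_spec S p₀ ha (ell_exists hconn hp₀ hleft hab.1 ha)).1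
    obtain ⟨m, hm, hmp⟩ := pred_adj S p₀ hab h1
    exact le_trans (ell_le S p₀ hmp) hm

lemma ell_walk_le {a b : ℝ × ℝ} (W : (pGraph S).Walk a b) :
    ell S p₀ b ≤ ell S p₀ a + W.length := by
  induction W with
  | nil => simp
  | @cons x y z h q ih =>
    rw [SimpleGraph.Walk.length_cons]
    have := ell_adj hconn hp₀ hleft h
    omega

lemma ell_le_add_dist {p q : ℝ × ℝ} (hp : p ∈ S) (hq : q ∈ S) :
    ell S p₀ q ≤ ell S p₀ p + (pGraph S).dist p q := by
  obtain ⟨W, hW⟩ := (hconn p hp q hq).exists_walk_length_eq_dist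
  rw [← hW]
  exact ell_walk_le hconn hp₀ hleft W

lemma ell_le_dist {w : ℝ × ℝ} (hw : w ∈ S) : ell S p₀ w ≤ (pGraph S).dist p₀ w := by
  have := ell_le_add_dist hconn hp₀ hleft hp₀ hw
  rwa [ell_p0, zero_add] at this

lemma descend (n : ℕ) {w₀ : ℝ × ℝ} (hw₀ : w₀ ∈ S) (hw₀n : ell S p₀ w₀ = n + 1) :
    ∃ m ∈ S, ell S p₀ m = n ∧ ∀ w ∈ S, ell S p₀ w = n + 1 → (pGraph S).Adj m w := by
  have hw₀ne : w₀ ≠ p₀ := by rintro rfl; rw [ell_p0] at hw₀n; omega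
  rcases Nat.even_or_odd n with ⟨k, hk⟩ | ⟨k, hk⟩
  · -- n = 2k, n+1 = 2k+1
    rcases Nat.eq_zero_or_pos k with rfl | hk1
    · refine ⟨p₀, hp₀, by rw [ell_p0]; omega, fun w hw hwn => ?_⟩
      have hwne : w ≠ p₀ := by rintro rfl; rw [ell_p0] at hwn; omega
      have hbox := (box_odd hconn hp₀ hleft hw (k := 0) (by omega)).1
      exact ⟨hp₀, hw, Or.inl ⟨hleft w hw hwne, hbox⟩⟩
    · have h1 : ell S p₀ w₀ = 2*k+1 := by omega
      obtain ⟨hylt, hge⟩ := box_odd hconn hp₀ hleft hw₀ h1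
      obtain ⟨hyge, hxge⟩ := hge hk1
      have hYlt : Yt S p₀ (k-1) < Yt S p₀ k := lt_of_le_of_lt hyge hylt
      have hYk : Yt S p₀ k = YofX S p₀ (Xt S p₀ (k-1)) := by
        conv_lhs => rw [show k = (k-1)+1 by omega]
        rfl
      rcases YofX_attain S p₀ (Xt S p₀ (k-1)) with hat | ⟨m, hmS, hmx, hmy⟩
      · exfalso
        have := Yt0_le S p₀ (k-1)
        rw [hYk, hat] at hYlt
        have := Yt0_le S p₀ (k-1)
        linarith [hYlt, this]
      · rw [← hYk] at hmy
        have hmne : m ≠ p₀ := by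
          intro h
          have := Yt0_le S p₀ (k-1)
          rw [h] at hmy
          linarith [hmy, hYlt, this]
        have hellm : ell S p₀ m = 2*k := by
          have hle : ell S p₀ m ≤ 2*k := ell_le S p₀ (Or.inr ⟨k-1, by omega, hmx⟩)
          rcases Nat.lt_or_ge (ell S p₀ m) (2*k) with hlt | hge'
          · exfalso
            have hp := (ell_spec S p₀ hmne (ell_exists hconn hp₀ hleft hmS hmne)).1
            rcases hp with ⟨i, hi, hyi⟩ | ⟨i, hi, hxi⟩
            · have : Yt S p₀ i ≤ Yt S p₀ (k-1) := Yt_mono S p₀ (by omega)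
              rw [hmy] at hyi
              linarith [hyi, this, hYlt]
            · have hY : m.2 ≤ Yt S p₀ (i+1) := by
                rw [Yt_succ]
                exact le_YofX S p₀ hmS hxi
              have : Yt S p₀ (i+1) ≤ Yt S p₀ (k-1) := Yt_mono S p₀ (by omega)
              rw [hmy] at hY
              linarith [hY, this, hYlt]
          · omega
        refine ⟨m, hmS, by omega, fun w hw hwn => ?_⟩
        obtain ⟨hw1, hw2⟩ := box_odd hconn hp₀ hleft hw (k := k) (by omega)
        obtain ⟨-, hwx⟩ := hw2 hk1
        exact ⟨hmS, hw, Or.inl ⟨lt_of_lt_of_le hmx hwx, by rw [← hmy] at hw1; exact hw1⟩⟩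
  · -- n = 2k+1, n+1 = 2k+2
    have h1 : ell S p₀ w₀ = 2*k+2 := by omega
    obtain ⟨hxlt, hyge, hxge⟩ := box_even hconn hp₀ hleft hw₀ h1
    rcases XofY_attain S p₀ (Yt S p₀ k) with hat | ⟨m, hmS, hmy, hmx⟩
    · exfalso
      have := hleft w₀ hw₀ hw₀ne
      have hXt : Xt S p₀ k = p₀.1 := hat
      linarith [hxlt, this, hXt.symm.le]
    · have hmx' : m.1 = Xt S p₀ k := hmx
      have hmne : m ≠ p₀ := by
        intro h
        have := hleft w₀ hw₀ hw₀ne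
        rw [h] at hmx'
        linarith [hxlt, this]
      have hellm : ell S p₀ m = 2*k+1 := by
        have hle : ell S p₀ m ≤ 2*k+1 := ell_le S p₀ (Or.inl ⟨k, rfl, hmy⟩)
        rcases Nat.lt_or_ge (ell S p₀ m) (2*k+1) with hlt | hge'
        · exfalso
          have hp := (ell_spec S p₀ hmne (ell_exists hconn hp₀ hleft hmS hmne)).1
          rcases hp with ⟨i, hi, hyi⟩ | ⟨i, hi, hxi⟩
          · have hX : m.1 ≤ Xt S p₀ i := le_XofY S p₀ hmS hyi
            have : Xt S p₀ i ≤ Xt S p₀ (k-1) := Xt_mono S p₀ (by omega)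
            have hk1 : 1 ≤ k := by omega
            have := hxge hk1
            linarith [hX, hxlt, hmx'.symm.le]
          · have : Xt S p₀ i ≤ Xt S p₀ (k-1) := Xt_mono S p₀ (by omega)
            have hk1 : 1 ≤ k := by omega
            have := hxge hk1
            linarith [hxi, hxlt, hmx'.symm.le]
        · omega
      refine ⟨m, hmS, by omega, fun w hw hwn => ?_⟩
      obtain ⟨hw1, hw2, -⟩ := box_even hconn hp₀ hleft hw (k := k) (by omega)
      refine ⟨hmS, hw, Or.inr ⟨by rw [hmx']; exact hw1, lt_of_lt_of_le hmy hw2⟩⟩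

lemma dist_le_ell' : ∀ (n : ℕ), ∀ w ∈ S, ell S p₀ w = n → (pGraph S).dist p₀ w ≤ n := by
  intro n
  induction n with
  | zero =>
    intro w hw h
    rw [eq_p0_of_ell_eq_zero hconn hp₀ hleft hw h, SimpleGraph.dist_self]
  | succ n ih =>
    intro w hw h
    obtain ⟨m, hmS, hmn, hadj⟩ := descend hconn hp₀ hleft n hw h
    have hm := ih m hmS hmn
    obtain ⟨W, hW⟩ := (hconn p₀ hp₀ m hmS).exists_walk_length_eq_dist
    have := SimpleGraph.dist_le (W.concat (hadj w hw h))
    rw [SimpleGraph.Walk.length_concat, hW] at this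
    omega

lemma ell_eq_dist {w : ℝ × ℝ} (hw : w ∈ S) : ell S p₀ w = (pGraph S).dist p₀ w :=
  le_antisymm (ell_le_dist hconn hp₀ hleft hw)
    (dist_le_ell' hconn hp₀ hleft _ w hw rfl)


lemma onTop_even {w : ℝ × ℝ} (hw : w ∈ S) (hwne : w ≠ p₀) (ht : onTop S w) :
    ell S p₀ w % 2 = 0 := by
  by_contra h
  obtain ⟨k, hk⟩ : ∃ k, ell S p₀ w = 2*k+1 := ⟨ell S p₀ w / 2, by omega⟩
  obtain ⟨hylt, hge⟩ := box_odd hconn hp₀ hleft hw hk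
  rcases Nat.eq_zero_or_pos k with rfl | hk1
  · exact ht p₀ hp₀ ⟨hleft w hw hwne, hylt⟩
  · obtain ⟨hyge, hxge⟩ := hge hk1
    have hYlt : Yt S p₀ (k-1) < Yt S p₀ k := lt_of_le_of_lt hyge hylt
    have hYk : Yt S p₀ k = YofX S p₀ (Xt S p₀ (k-1)) := by
      conv_lhs => rw [show k = (k-1)+1 by omega]
      rfl
    rcases YofX_attain S p₀ (Xt S p₀ (k-1)) with hat | ⟨m, hmS, hmx, hmy⟩
    · rw [hYk, hat] at hYlt
      have := Yt0_le S p₀ (k-1)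
      linarith
    · rw [← hYk] at hmy
      exact ht m hmS ⟨lt_of_lt_of_le hmx hxge, by rw [hmy]; exact hylt⟩

lemma onBottom_odd {w : ℝ × ℝ} (hw : w ∈ S) (hwne : w ≠ p₀) (hb : onBottom S w) :
    ell S p₀ w % 2 = 1 := by
  by_contra h
  have hne0 := ell_ne_zero hconn hp₀ hleft hw hwne
  obtain ⟨k, hk⟩ : ∃ k, ell S p₀ w = 2*k+2 := ⟨ell S p₀ w / 2 - 1, by omega⟩
  obtain ⟨hxlt, hyge, -⟩ := box_even hconn hp₀ hleft hw hk
  rcases XofY_attain S p₀ (Yt S p₀ k) with hat | ⟨m, hmS, hmy, hmx⟩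
  · have h2 := hleft w hw hwne
    have hXt : Xt S p₀ k = p₀.1 := hat
    rw [hXt] at hxlt
    linarith
  · exact hb m hmS ⟨hmx ▸ hxlt, lt_of_lt_of_le hmy hyge⟩

lemma tri {p q r : ℝ × ℝ} (hp : p ∈ S) (hq : q ∈ S) (hr : r ∈ S) :
    (pGraph S).dist p r ≤ (pGraph S).dist p q + (pGraph S).dist q r := by
  obtain ⟨W1, h1⟩ := (hconn p hp q hq).exists_walk_length_eq_dist
  obtain ⟨W2, h2⟩ := (hconn q hq r hr).exists_walk_length_eq_dist
  have := SimpleGraph.dist_le (W1.append W2)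
  rwa [SimpleGraph.Walk.length_append, h1, h2] at this

omit hconn hp₀ hleft in
lemma dist_adj {p q : ℝ × ℝ} (h : (pGraph S).Adj p q) : (pGraph S).dist p q ≤ 1 := by
  have := SimpleGraph.dist_le (SimpleGraph.Walk.cons h SimpleGraph.Walk.nil)
  simpa using this

lemma chain : ∀ (d : ℕ) (j : ℕ) (v : ℝ × ℝ), 1 ≤ j → j + d = ell S p₀ v → v ∈ S →
    ∃ m ∈ S, ell S p₀ m = j - 1 ∧ (pGraph S).dist m v ≤ d + 1 ∧
      ∀ w ∈ S, ell S p₀ w = j → (pGraph S).Adj m w := by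
  intro d
  induction d with
  | zero =>
    intro j v hj hjd hv
    obtain ⟨m, hmS, hmn, hadj⟩ := descend hconn hp₀ hleft (j-1) hv (by omega)
    refine ⟨m, hmS, hmn, ?_, fun w hw hwn => hadj w hw (by omega)⟩
    exact dist_adj (hadj v hv (by omega))
  | succ d ih =>
    intro j v hj hjd hv
    obtain ⟨m', hm'S, hm'n, -, hadj'⟩ := ih (j+1) v (by omega) (by omega) hv
    obtain ⟨m'', hm''S, hm''n, hd'', -⟩ := ih (j+1) v (by omega) (by omega) hv
    obtain ⟨m, hmS, hmn, hadj⟩ := descend hconn hp₀ hleft (j-1) hm'S (by omega)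
    refine ⟨m, hmS, hmn, ?_, fun w hw hwn => hadj w hw (by omega)⟩
    have h1 := tri hconn hp₀ hleft hmS hm''S hv
    have h2 := dist_adj (hadj m'' hm''S (by omega))
    omega

lemma dist_le_ub {u v : ℝ × ℝ} (hu : u ∈ S) (hv : v ∈ S) (hle : ell S p₀ u ≤ ell S p₀ v) :
    (pGraph S).dist u v ≤ ell S p₀ v - ell S p₀ u + 2 := by
  by_cases hu0 : ell S p₀ u = 0
  · have hup : u = p₀ := eq_p0_of_ell_eq_zero hconn hp₀ hleft hu hu0
    have h1 := ell_eq_dist hconn hp₀ hleft hv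
    have h0 := ell_p0 S p₀
    rw [hup]
    omega
  · obtain ⟨m, hmS, hmn, hd, hadj⟩ := chain hconn hp₀ hleft (ell S p₀ v - ell S p₀ u)
      (ell S p₀ u) v (by omega) (by omega) hv
    have h1 := tri hconn hp₀ hleft hu hmS hv
    have h2 := dist_adj ((hadj u hu rfl).symm)
    omega

lemma exists_pred_vertex {u x : ℝ × ℝ} (hu : u ∈ S) (hx : x ∈ S)
    (h : 1 ≤ (pGraph S).dist u x) :
    ∃ z ∈ S, (pGraph S).Adj z x ∧ (pGraph S).dist u z + 1 = (pGraph S).dist u x := by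
  obtain ⟨W, hW⟩ := (hconn u hu x hx).exists_walk_length_eq_dist
  have hne : x ≠ u := by
    rintro rfl
    rw [SimpleGraph.dist_self] at h
    omega
  obtain ⟨z, hadj, W', hW'⟩ := SimpleGraph.Walk.exists_eq_cons_of_ne hne W.reverse
  have hlen : W'.length + 1 = (pGraph S).dist u x := by
    have := congrArg SimpleGraph.Walk.length hW'
    rw [SimpleGraph.Walk.length_reverse, SimpleGraph.Walk.length_cons] at this
    omega
  have hzS : z ∈ S := hadj.2.1
  have h1 : (pGraph S).dist u z ≤ W'.length := by
    have := SimpleGraph.dist_le W'.reverse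
    rwa [SimpleGraph.Walk.length_reverse] at this
  have h2 := tri hconn hp₀ hleft hu hzS hx
  have h3 := dist_adj hadj.symm
  exact ⟨z, hzS, hadj.symm, by omega⟩

lemma flat_or_parity {a b : ℝ × ℝ} (ha : a ∈ S) (W : (pGraph S).Walk a b) :
    (∃ x y, (pGraph S).Adj x y ∧ ell S p₀ x = ell S p₀ y ∧
      (pGraph S).dist a x + 1 + (pGraph S).dist y b ≤ W.length) ∨
    (ell S p₀ a + W.length) % 2 = ell S p₀ b % 2 := by
  induction W with
  | nil => right; simp
  | @cons a₁ c b₁ h q ih =>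
    have hc : c ∈ S := h.2.1
    have ha₁ : a₁ ∈ S := h.1
    rcases ih hc with ⟨x, y, hxy, he, hle⟩ | hpar
    · left
      refine ⟨x, y, hxy, he, ?_⟩
      have h1 := tri hconn hp₀ hleft ha₁ hc hxy.1
      have h2 := dist_adj h
      rw [SimpleGraph.Walk.length_cons]
      omega
    · by_cases hflat : ell S p₀ c = ell S p₀ a₁
      · left
        refine ⟨a₁, c, h, hflat.symm, ?_⟩
        have h1 := SimpleGraph.dist_le q
        rw [SimpleGraph.Walk.length_cons, SimpleGraph.dist_self]
        omega
      · right
        have h1 := ell_adj hconn hp₀ hleft h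
        have h2 := ell_adj hconn hp₀ hleft h.symm
        rw [SimpleGraph.Walk.length_cons]
        omega


lemma no_mid {u v : ℝ × ℝ} (hu : u ∈ S) (hv : v ∈ S)
    (hub : onTop S u ∨ onBottom S u) (hvb : onTop S v ∨ onBottom S v)
    (hab : ell S p₀ u ≤ ell S p₀ v) :
    (pGraph S).dist u v ≠ ell S p₀ v - ell S p₀ u + 1 := by
  intro hmid
  obtain ⟨W, hW⟩ := (hconn u hu v hv).exists_walk_length_eq_dist
  rcases flat_or_parity hconn hp₀ hleft hu W with ⟨x, y, hxy, hexy, hle⟩ | hpar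
  swap
  · rw [hW, hmid] at hpar
    omega
  rw [hW, hmid] at hle
  have hxS : x ∈ S := hxy.1
  have hyS : y ∈ S := hxy.2.1
  have e1 : ell S p₀ x ≤ ell S p₀ u + (pGraph S).dist u x :=
    ell_le_add_dist hconn hp₀ hleft hu hxS
  have e2 : ell S p₀ u ≤ ell S p₀ x + (pGraph S).dist u x := by
    have := ell_le_add_dist hconn hp₀ hleft hxS hu
    rwa [SimpleGraph.dist_comm (u := x) (v := u)] at this
  have e3 : ell S p₀ v ≤ ell S p₀ y + (pGraph S).dist y v :=
    ell_le_add_dist hconn hp₀ hleft hyS hv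
  have e4 : ell S p₀ y ≤ ell S p₀ v + (pGraph S).dist y v := by
    have := ell_le_add_dist hconn hp₀ hleft hv hyS
    rwa [SimpleGraph.dist_comm (u := v) (v := y)] at this
  rw [← hexy] at e3 e4
  have key : ell S p₀ u ≤ ell S p₀ x ∧ ell S p₀ x ≤ ell S p₀ v ∧
      (pGraph S).dist u x = ell S p₀ x - ell S p₀ u ∧
      (pGraph S).dist y v = ell S p₀ v - ell S p₀ x := by omega
  obtain ⟨kl1, kl2, kd1, kd2⟩ := key
  have ht1 : 1 ≤ ell S p₀ x := by
    rcases Nat.eq_zero_or_pos (ell S p₀ x) with h0 | h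
    · exfalso
      have hx0 := eq_p0_of_ell_eq_zero hconn hp₀ hleft hxS h0
      have hy0 := eq_p0_of_ell_eq_zero hconn hp₀ hleft hyS (by omega)
      exact hxy.ne (hx0.trans hy0.symm)
    · exact h
  have hxne : x ≠ p₀ := fun h => by simp [h, ell_p0] at ht1
  have hyne : y ≠ p₀ := fun h => by rw [h] at hexy; rw [ell_p0] at hexy; omega
  rcases Nat.even_or_odd (ell S p₀ x) with ⟨k', hk'⟩ | ⟨k', hk'⟩
  · -- even layer t = 2k+2
    obtain ⟨k, hk⟩ : ∃ k, ell S p₀ x = 2*k+2 := ⟨k'-1, by omega⟩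
    have hky : ell S p₀ y = 2*k+2 := by omega
    obtain ⟨hx1, hx2, -⟩ := box_even hconn hp₀ hleft hxS hk
    obtain ⟨hy1, hy2, -⟩ := box_even hconn hp₀ hleft hyS hky
    rcases hxy.2.2 with hO | hO
    · -- inTL x y
      by_cases htb : ell S p₀ x = ell S p₀ v
      · have hyv : y = v := ((hconn y hyS v hv).dist_eq_zero_iff).1 (by omega)
        subst hyv
        have hvne : y ≠ p₀ := hyne
        have hvTop : onTop S y := by
          rcases hvb with h | h
          · exact h
          · have := onBottom_odd hconn hp₀ hleft hv hvne h
            omega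
        exact hvTop x hxS hO
      · have hd1 : 1 ≤ (pGraph S).dist v y := by rw [SimpleGraph.dist_comm]; omega
        obtain ⟨c, hcS, hcy, hdc⟩ := exists_pred_vertex hconn hp₀ hleft hv hyS hd1
        rw [SimpleGraph.dist_comm (u := v) (v := c), SimpleGraph.dist_comm (u := v) (v := y)] at hdc
        have hcell : ell S p₀ c = 2*(k+1)+1 := by
          have l1 := ell_adj hconn hp₀ hleft hcy.symm
          have l2 := ell_le_add_dist hconn hp₀ hleft hcS hv
          omega
        obtain ⟨hc1, hcge⟩ := box_odd hconn hp₀ hleft hcS hcell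
        obtain ⟨hc2, hc3⟩ := hcge (by omega)
        simp only [Nat.add_sub_cancel] at hc2 hc3
        have hyc : y.1 < c.1 := lt_of_lt_of_le hy1 hc3
        have hcy2 : c.2 < y.2 := by
          rcases hcy.2.2 with ⟨h1', h2'⟩ | ⟨h1', h2'⟩
          · linarith
          · exact h2'
        have hxc : (pGraph S).Adj x c :=
          ⟨hxS, hcS, Or.inl ⟨lt_of_lt_of_le hx1 hc3, lt_trans hcy2 hO.2⟩⟩
        have t1 := tri hconn hp₀ hleft hu hxS hv
        have t2 := tri hconn hp₀ hleft hxS hcS hv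
        have t3 := dist_adj hxc
        omega
    · -- inTL y x
      by_cases hta : ell S p₀ x = ell S p₀ u
      · have hxu : u = x := ((hconn u hu x hxS).dist_eq_zero_iff).1 (by omega)
        subst hxu
        have hune : u ≠ p₀ := hxne
        have huTop : onTop S u := by
          rcases hub with h | h
          · exact h
          · have := onBottom_odd hconn hp₀ hleft hu hune h
            omega
        exact huTop y hyS hO
      · have hd1 : 1 ≤ (pGraph S).dist u x := by omega
        obtain ⟨z, hzS, hzx, hdz⟩ := exists_pred_vertex hconn hp₀ hleft hu hxS hd1
        have hzell : ell S p₀ z = 2*k+1 := by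
          have l1 := ell_adj hconn hp₀ hleft hzx
          have l2 := ell_le_add_dist hconn hp₀ hleft hu hzS
          omega
        obtain ⟨hz1, -⟩ := box_odd hconn hp₀ hleft hzS hzell
        have hxz : x.1 < z.1 := by
          rcases hzx.2.2 with ⟨h1', h2'⟩ | ⟨h1', h2'⟩
          · linarith
          · exact h1'
        have hzy : (pGraph S).Adj z y :=
          ⟨hzS, hyS, Or.inr ⟨lt_trans hO.1 hxz, lt_of_lt_of_le hz1 hy2⟩⟩
        have t1 := tri hconn hp₀ hleft hu hzS hv
        have t2 := tri hconn hp₀ hleft hzS hyS hv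
        have t3 := dist_adj hzy
        omega
  · -- odd layer t = 2k'+1
    have hk : ell S p₀ x = 2*k'+1 := hk'
    have hky : ell S p₀ y = 2*k'+1 := by omega
    obtain ⟨hx1, hxge⟩ := box_odd hconn hp₀ hleft hxS hk
    obtain ⟨hy1, hyge⟩ := box_odd hconn hp₀ hleft hyS hky
    rcases hxy.2.2 with hO | hO
    · -- inTL x y
      by_cases hta : ell S p₀ x = ell S p₀ u
      · have hxu : u = x := ((hconn u hu x hxS).dist_eq_zero_iff).1 (by omega)
        subst hxu
        have hune : u ≠ p₀ := hxne
        have huBot : onBottom S u := by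
          rcases hub with h | h
          · have := onTop_even hconn hp₀ hleft hu hune h
            omega
          · exact h
        exact huBot y hyS hO
      · have hd1 : 1 ≤ (pGraph S).dist u x := by omega
        obtain ⟨z, hzS, hzx, hdz⟩ := exists_pred_vertex hconn hp₀ hleft hu hxS hd1
        have hzell : ell S p₀ z = 2*k' := by
          have l1 := ell_adj hconn hp₀ hleft hzx
          have l2 := ell_le_add_dist hconn hp₀ hleft hu hzS
          omega
        rcases Nat.eq_zero_or_pos k' with hk0 | hk1
        · have hzp : z = p₀ := eq_p0_of_ell_eq_zero hconn hp₀ hleft hzS (by omega)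
          have hzy : (pGraph S).Adj z y := by
            rw [hzp]
            refine ⟨hp₀, hyS, Or.inl ⟨hleft y hyS hyne, ?_⟩⟩
            have : y.2 < Yt S p₀ 0 := by rw [hk0] at hy1; exact hy1
            exact this
          have t1 := tri hconn hp₀ hleft hu hzS hv
          have t2 := tri hconn hp₀ hleft hzS hyS hv
          have t3 := dist_adj hzy
          omega
        · obtain ⟨hz1, hz2, -⟩ := box_even hconn hp₀ hleft hzS
            (k := k'-1) (by omega)
          obtain ⟨hxg1, hxg2⟩ := hxge hk1
          have hzlt : z.1 < x.1 := lt_of_lt_of_le hz1 hxg2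
          have hxz2 : x.2 < z.2 := by
            rcases hzx.2.2 with ⟨h1', h2'⟩ | ⟨h1', h2'⟩
            · exact h2'
            · linarith
          have hzy : (pGraph S).Adj z y :=
            ⟨hzS, hyS, Or.inl ⟨lt_trans hzlt hO.1, lt_trans hO.2 hxz2⟩⟩
          have t1 := tri hconn hp₀ hleft hu hzS hv
          have t2 := tri hconn hp₀ hleft hzS hyS hv
          have t3 := dist_adj hzy
          omega
    · -- inTL y x
      by_cases htb : ell S p₀ x = ell S p₀ v
      · have hyv : y = v := ((hconn y hyS v hv).dist_eq_zero_iff).1 (by omega)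
        subst hyv
        have hvne : y ≠ p₀ := hyne
        have hvBot : onBottom S y := by
          rcases hvb with h | h
          · have := onTop_even hconn hp₀ hleft hv hvne h
            omega
          · exact h
        exact hvBot x hxS hO
      · have hd1 : 1 ≤ (pGraph S).dist v y := by rw [SimpleGraph.dist_comm]; omega
        obtain ⟨c, hcS, hcy, hdc⟩ := exists_pred_vertex hconn hp₀ hleft hv hyS hd1
        rw [SimpleGraph.dist_comm (u := v) (v := c), SimpleGraph.dist_comm (u := v) (v := y)] at hdc
        have hcell : ell S p₀ c = 2*k'+2 := by
          have l1 := ell_adj hconn hp₀ hleft hcy.symm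
          have l2 := ell_le_add_dist hconn hp₀ hleft hcS hv
          omega
        obtain ⟨hc1, hc2, -⟩ := box_even hconn hp₀ hleft hcS hcell
        have hyc2 : y.2 < c.2 := lt_of_lt_of_le hy1 hc2
        have hcy1 : c.1 < y.1 := by
          rcases hcy.2.2 with ⟨h1', h2'⟩ | ⟨h1', h2'⟩
          · exact h1'
          · linarith
        have hxc : (pGraph S).Adj x c :=
          ⟨hxS, hcS, Or.inr ⟨lt_trans hcy1 hO.1, lt_of_lt_of_le hx1 hc2⟩⟩
        have t1 := tri hconn hp₀ hleft hu hxS hv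
        have t2 := tri hconn hp₀ hleft hxS hcS hv
        have t3 := dist_adj hxc
        omega

end Stmt7

/-- with layers `L w = dist p₀ w` defined by distances from the leftmost
point `p₀`, any two boundary points `u, v` with `L u ≤ L v` satisfy
`d(u,v) = L v − L u` or `d(u,v) = L v − L u + 2`. -/
theorem stmt7 (S : Finset (ℝ × ℝ)) (hS : DistinctCoords S)
    (hconn : ∀ p ∈ S, ∀ q ∈ S, (pGraph S).Reachable p q)
    (p₀ : ℝ × ℝ) (hp₀ : p₀ ∈ S) (hleft : ∀ q ∈ S, q ≠ p₀ → p₀.1 < q.1)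
    (L : ℝ × ℝ → ℕ) (hL : ∀ w, L w = (pGraph S).dist p₀ w)
    (u v : ℝ × ℝ) (hu : u ∈ S) (hv : v ∈ S)
    (hub : onTop S u ∨ onBottom S u) (hvb : onTop S v ∨ onBottom S v)
    (hLuv : L u ≤ L v) :
    (pGraph S).dist u v = L v - L u ∨ (pGraph S).dist u v = L v - L u + 2 := by
  have hLu : L u = Stmt7.ell S p₀ u := by
    rw [hL u, Stmt7.ell_eq_dist hconn hp₀ hleft hu]
  have hLv : L v = Stmt7.ell S p₀ v := by
    rw [hL v, Stmt7.ell_eq_dist hconn hp₀ hleft hv]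
  have hab : Stmt7.ell S p₀ u ≤ Stmt7.ell S p₀ v := by omega
  have low := Stmt7.ell_le_add_dist hconn hp₀ hleft hu hv
  have up := Stmt7.dist_le_ub hconn hp₀ hleft hu hv hab
  have nm := Stmt7.no_mid hconn hp₀ hleft hu hv hub hvb hab
  rw [hLu, hLv]
  omega
end

section
/- With layers defined by distance from the leftmost point, the set of boundary points in each layer k ≥ 1 forms a set of consecutive points in the boundary order of the corresponding boundary (layer 2k is a contiguous interval of the ordered top-boundary points, layer 2k+1 a contiguous interval of the ordered bottom-boundary points). -/
/-- one-step distance bound -/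
lemma step_dist {S : Finset (ℝ × ℝ)}
    (hconn : ∀ p ∈ S, ∀ q ∈ S, (pGraph S).Reachable p q)
    {p₀ y a : ℝ × ℝ} (hp₀ : p₀ ∈ S) (hy : y ∈ S)
    (hadj : (pGraph S).Adj y a) :
    (pGraph S).dist p₀ a ≤ (pGraph S).dist p₀ y + 1 := by
  obtain ⟨W, hW⟩ := (hconn p₀ hp₀ y hy).exists_walk_length_eq_dist
  calc (pGraph S).dist p₀ a ≤ (W.concat hadj).length := SimpleGraph.dist_le _
    _ = W.length + 1 := SimpleGraph.Walk.length_concat _ _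
    _ = _ := by rw [hW]

/-- trichotomy for two points of S -/
lemma tricho {S : Finset (ℝ × ℝ)} (hS : DistinctCoords S)
    {x y : ℝ × ℝ} (hx : x ∈ S) (hy : y ∈ S) :
    x = y ∨ (pGraph S).Adj x y ∨ (x.1 < y.1 ∧ x.2 < y.2) ∨ (y.1 < x.1 ∧ y.2 < x.2) := by
  by_cases h : x = y
  · exact Or.inl h
  obtain ⟨h1, h2⟩ := hS x hx y hy h
  rcases lt_or_gt_of_ne h1 with hx1 | hx1 <;> rcases lt_or_gt_of_ne h2 with hy1 | hy1
  · exact Or.inr (Or.inr (Or.inl ⟨hx1, hy1⟩))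
  · exact Or.inr (Or.inl ⟨hx, hy, Or.inl ⟨hx1, hy1⟩⟩)
  · exact Or.inr (Or.inl ⟨hx, hy, Or.inr ⟨hx1, hy1⟩⟩)
  · exact Or.inr (Or.inr (Or.inr ⟨hx1, hy1⟩))

/-- key walk lemma -/
lemma key {S : Finset (ℝ × ℝ)} (hS : DistinctCoords S)
    (hconn : ∀ p ∈ S, ∀ q ∈ S, (pGraph S).Reachable p q)
    {p₀ : ℝ × ℝ} (hp₀ : p₀ ∈ S)
    {x b : ℝ × ℝ} (W : (pGraph S).Walk x b) :
    ∀ a ∈ S, x.1 < a.1 → x.2 < a.2 → a.1 < b.1 → a.2 < b.2 →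
      (pGraph S).dist p₀ a ≤ (pGraph S).dist p₀ x + W.length := by
  induction W with
  | nil => intro a _ h1 h2 h3 h4; exact absurd (h1.trans h3) (lt_irrefl _)
  | @cons x y b hadj W' ih =>
    intro a ha h1 h2 h3 h4
    have hy : y ∈ S := hadj.2.1
    rw [SimpleGraph.Walk.length_cons]
    rcases tricho hS hy ha with rfl | hyadj | ⟨hl1, hl2⟩ | ⟨hg1, hg2⟩
    · -- y = a
      have := step_dist hconn hp₀ hadj.1 hadj
      omega
    · -- y adjacent a
      have hyb : y ≠ b := by
        rintro rfl
        rcases hyadj.2.2 with ⟨q1, q2⟩ | ⟨q1, q2⟩ <;> linarith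
      have hW' : 1 ≤ W'.length := by
        cases W' with
        | nil => exact absurd rfl hyb
        | cons h p => simp [SimpleGraph.Walk.length_cons]
      have t1 := step_dist hconn hp₀ hy hyadj
      have t2 := step_dist hconn hp₀ hadj.1 hadj
      omega
    · -- y < a
      have := ih a ha hl1 hl2 h3 h4
      have := step_dist hconn hp₀ hadj.1 hadj
      omega
    · -- a < y : contradicts adjacency x ~ y
      exfalso
      rcases hadj.2.2 with ⟨q1, q2⟩ | ⟨q1, q2⟩ <;> linarith

/-- monotonicity -/
lemma mono {S : Finset (ℝ × ℝ)} (hS : DistinctCoords S)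
    (hconn : ∀ p ∈ S, ∀ q ∈ S, (pGraph S).Reachable p q)
    {p₀ a b : ℝ × ℝ} (hp₀ : p₀ ∈ S) (ha : a ∈ S) (hb : b ∈ S)
    (h1 : p₀.1 < a.1) (h2 : p₀.2 < a.2) (h3 : a.1 < b.1) (h4 : a.2 < b.2) :
    (pGraph S).dist p₀ a ≤ (pGraph S).dist p₀ b := by
  obtain ⟨W, hW⟩ := (hconn p₀ hp₀ b hb).exists_walk_length_eq_dist
  have := key hS hconn hp₀ W a ha h1 h2 h3 h4
  rw [hW] at this
  simpa [SimpleGraph.dist_self] using this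

/-- each layer (distance class from the leftmost point `p₀`) is a
contiguous interval of the corresponding boundary in boundary order: if `u, w, v` lie
on the same boundary with `u.1 < w.1 < v.1` and `u, v` are in the same layer, then so
is `w`. -/
theorem stmt8 (S : Finset (ℝ × ℝ)) (hS : DistinctCoords S)
    (hconn : ∀ p ∈ S, ∀ q ∈ S, (pGraph S).Reachable p q)
    (p₀ : ℝ × ℝ) (hp₀ : p₀ ∈ S) (hleft : ∀ q ∈ S, q ≠ p₀ → p₀.1 < q.1)
    (L : ℝ × ℝ → ℕ) (hL : ∀ w, L w = (pGraph S).dist p₀ w)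
    (u w v : ℝ × ℝ) (hu : u ∈ S) (hw : w ∈ S) (hv : v ∈ S)
    (hbnd : (onTop S u ∧ onTop S w ∧ onTop S v) ∨
            (onBottom S u ∧ onBottom S w ∧ onBottom S v))
    (hx1 : u.1 < w.1) (hx2 : w.1 < v.1)
    (hlay : L u = L v) (hk : 1 ≤ L u) :
    L w = L u := by
  simp only [hL] at *
  -- u ≠ p₀
  have hup : u ≠ p₀ := by
    rintro rfl; rw [SimpleGraph.dist_self] at hk; omega
  have hpu1 : p₀.1 < u.1 := hleft u hu hup
  have hwp : w ≠ p₀ := by rintro rfl; linarith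
  have hvp : v ≠ p₀ := by rintro rfl; linarith
  -- coordinate order on the boundary
  have huw : ¬ inTL u w := by
    rcases hbnd with ⟨_, hTw, _⟩ | ⟨hBu, _, _⟩
    · exact hTw u hu
    · exact hBu w hw
  have hwv : ¬ inTL w v := by
    rcases hbnd with ⟨_, _, hTv⟩ | ⟨_, hBw, _⟩
    · exact hTv w hw
    · exact hBw v hv
  have huw2 : u.2 < w.2 := by
    have hne : u ≠ w := by intro h; rw [h] at hx1; exact lt_irrefl _ hx1
    have := (hS u hu w hw hne).2
    rcases lt_or_gt_of_ne this with h | h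
    · exact h
    · exact absurd ⟨hx1, h⟩ huw
  have hwv2 : w.2 < v.2 := by
    have hne : w ≠ v := by intro h; rw [h] at hx2; exact lt_irrefl _ hx2
    have := (hS w hw v hv hne).2
    rcases lt_or_gt_of_ne this with h | h
    · exact h
    · exact absurd ⟨hx2, h⟩ hwv
  -- w has positive distance
  have hwpos : 1 ≤ (pGraph S).dist p₀ w :=
    (hconn p₀ hp₀ w hw).pos_dist_of_ne (Ne.symm hwp)
  have hp2u : p₀.2 ≠ u.2 := (hS p₀ hp₀ u hu (Ne.symm hup)).2
  have hp2w : p₀.2 ≠ w.2 := (hS p₀ hp₀ w hw (Ne.symm hwp)).2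
  rcases lt_or_gt_of_ne hp2u with hc | hc
  · -- p₀ < u < w < v in both coordinates
    have m1 := mono hS hconn hp₀ hu hw hpu1 hc hx1 huw2
    have m2 := mono hS hconn hp₀ hw hv (by linarith) (by linarith) hx2 hwv2
    omega
  · -- p₀ adjacent to u, so dist p₀ u = 1
    have hadj : (pGraph S).Adj p₀ u := ⟨hp₀, hu, Or.inl ⟨hpu1, hc⟩⟩
    have hdu : (pGraph S).dist p₀ u ≤ 1 := by
      have := step_dist hconn hp₀ hp₀ hadj
      rw [SimpleGraph.dist_self] at this; omega
    rcases lt_or_gt_of_ne hp2w with hc2 | hc2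
    · -- p₀ < w < v
      have m2 := mono hS hconn hp₀ hw hv (by linarith) hc2 hx2 hwv2
      omega
    · -- p₀ adjacent to w
      have hadj2 : (pGraph S).Adj p₀ w := ⟨hp₀, hw, Or.inl ⟨by linarith, hc2⟩⟩
      have hdw : (pGraph S).dist p₀ w ≤ 1 := by
        have := step_dist hconn hp₀ hp₀ hadj2
        rw [SimpleGraph.dist_self] at this; omega
      omega
end

section
/- With layers as above, every point of layer k+1 is adjacent to the last (largest in boundary order) point of layer k. -/
namespace Stmt9Aux

open SimpleGraph

/-- Split a walk at index `i`. -/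
lemma exists_split {V : Type*} {G : SimpleGraph V} {a z : V} (W : G.Walk a z) :
    ∀ i : ℕ, i ≤ W.length →
      ∃ (W1 : G.Walk a (W.getVert i)) (W2 : G.Walk (W.getVert i) z),
        W1.length = i ∧ W2.length = W.length - i := by
  induction W with
  | nil =>
    intro i hi
    simp only [Walk.length_nil, Nat.le_zero] at hi
    subst hi
    exact ⟨Walk.nil.copy rfl (Walk.getVert_zero _).symm,
           Walk.nil.copy (Walk.getVert_zero _).symm rfl, by simp, by simp⟩
  | cons h q ih =>
    intro i hi
    match i with
    | 0 =>
      exact ⟨Walk.nil.copy rfl (Walk.getVert_zero _).symm,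
             (Walk.cons h q).copy (Walk.getVert_zero _).symm rfl, by simp, by simp⟩
    | (i+1) =>
      obtain ⟨q1, q2, h1, h2⟩ := ih i (by simp only [Walk.length_cons] at hi; omega)
      refine ⟨(q1.cons h).copy rfl (Walk.getVert_cons_succ q h).symm,
             q2.copy (Walk.getVert_cons_succ q h).symm rfl, ?_, ?_⟩
      · simp [Walk.length_copy, Walk.length_cons, h1]
      · simp only [Walk.length_copy, Walk.length_cons, h2]; omega

lemma dist_getVert_eq {V : Type*} {G : SimpleGraph V} {a z : V} {W : G.Walk a z}
    (hW : W.length = G.dist a z) {i : ℕ} (hi : i ≤ W.length) :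
    G.dist a (W.getVert i) = i := by
  obtain ⟨W1, W2, h1, h2⟩ := exists_split W i hi
  refine le_antisymm (by have := SimpleGraph.dist_le W1; omega) ?_
  by_contra hlt
  push_neg at hlt
  obtain ⟨V1, hV1⟩ := (Reachable.exists_walk_length_eq_dist ⟨W1⟩)
  have hle := SimpleGraph.dist_le (V1.append W2)
  rw [Walk.length_append, hV1, h2] at hle
  omega

lemma dist_adj_le {V : Type*} {G : SimpleGraph V} {p₀ a b : V}
    (hr : G.Reachable p₀ a) (h : G.Adj a b) :
    G.dist p₀ b ≤ G.dist p₀ a + 1 := by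
  obtain ⟨W, hW⟩ := hr.exists_walk_length_eq_dist
  have hle := SimpleGraph.dist_le (W.append (Walk.cons h Walk.nil))
  simpa [Walk.length_append, hW] using hle

lemma exists_prev {V : Type*} {G : SimpleGraph V} {p₀ u : V} (hr : G.Reachable p₀ u) {n : ℕ}
    (hd : G.dist p₀ u = n + 1) :
    ∃ v, G.Adj v u ∧ G.dist p₀ v = n := by
  obtain ⟨W, hW⟩ := hr.exists_walk_length_eq_dist
  have hlen : W.length = n + 1 := hW.trans hd
  have hadj : G.Adj (W.getVert n) (W.getVert (n+1)) := W.adj_getVert_succ (by omega)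
  have hend : W.getVert (n+1) = u := W.getVert_of_length_le (le_of_eq hlen)
  rw [hend] at hadj
  refine ⟨W.getVert n, hadj, ?_⟩
  exact dist_getVert_eq (hW.trans hd ▸ hW) (by omega)

lemma getVert_mem {S : Finset (ℝ × ℝ)} {p₀ z : ℝ × ℝ} (hp₀ : p₀ ∈ S)
    (W : (pGraph S).Walk p₀ z) : ∀ i, W.getVert i ∈ S := by
  intro i
  induction i with
  | zero => simpa [Walk.getVert_zero] using hp₀
  | succ i ih =>
    by_cases hi : i < W.length
    · exact (W.adj_getVert_succ hi).2.1
    · push_neg at hi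
      rw [W.getVert_of_length_le (by omega)]
      rw [W.getVert_of_length_le hi] at ih
      exact ih

lemma crossing {S : Finset (ℝ × ℝ)} {p₀ : ℝ × ℝ} (hS : DistinctCoords S) (hp₀ : p₀ ∈ S)
    {u z : ℝ × ℝ} (hu : u ∈ S) (hz : z ∈ S) (hr : (pGraph S).Reachable p₀ z)
    (hp₀u : p₀.1 < u.1) (hzu : u.1 < z.1)
    (hud : (pGraph S).dist p₀ z < (pGraph S).dist p₀ u) :
    ∃ a b, a ∈ S ∧ b ∈ S ∧ (pGraph S).Adj a b ∧ a.1 < u.1 ∧ u.1 < b.1 ∧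
      (pGraph S).dist p₀ a + 1 = (pGraph S).dist p₀ b ∧
      (pGraph S).dist p₀ b ≤ (pGraph S).dist p₀ z ∧
      ((pGraph S).dist p₀ b = (pGraph S).dist p₀ z → b = z) := by
  classical
  obtain ⟨W, hW⟩ := hr.exists_walk_length_eq_dist
  have hex : ∃ j, u.1 < (W.getVert j).1 := ⟨W.length, by rwa [W.getVert_length]⟩
  have hjle : Nat.find hex ≤ W.length := Nat.find_le (by rwa [W.getVert_length])
  have hj0 : Nat.find hex ≠ 0 := by
    intro h0
    have hj := Nat.find_spec hex
    rw [h0, W.getVert_zero] at hj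
    linarith
  obtain ⟨i, hieq⟩ : ∃ i, Nat.find hex = i + 1 := ⟨Nat.find hex - 1, by omega⟩
  have hnotlt : ¬ u.1 < (W.getVert i).1 := Nat.find_min hex (by omega)
  have hjspec : u.1 < (W.getVert (i+1)).1 := by rw [← hieq]; exact Nat.find_spec hex
  have hi1le : i + 1 ≤ W.length := by omega
  have hadj : (pGraph S).Adj (W.getVert i) (W.getVert (i+1)) :=
    W.adj_getVert_succ (by omega)
  have haS : W.getVert i ∈ S := getVert_mem hp₀ W i
  have hbS : W.getVert (i+1) ∈ S := getVert_mem hp₀ W (i+1)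
  have hda : (pGraph S).dist p₀ (W.getVert i) = i := dist_getVert_eq hW (by omega)
  have hdb : (pGraph S).dist p₀ (W.getVert (i+1)) = i + 1 := dist_getVert_eq hW hi1le
  have hane : W.getVert i ≠ u := by
    intro he
    rw [he] at hda
    omega
  have hax : (W.getVert i).1 < u.1 :=
    lt_of_le_of_ne (not_lt.mp hnotlt) ((hS _ haS u hu hane).1)
  refine ⟨W.getVert i, W.getVert (i+1), haS, hbS, hadj, hax, hjspec, by omega, by omega, ?_⟩
  intro hb
  have : i + 1 = W.length := by omega
  rw [this] at *
  exact W.getVert_length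

lemma parity {S : Finset (ℝ × ℝ)} {p₀ : ℝ × ℝ} (hS : DistinctCoords S)
    (hconn : ∀ p ∈ S, ∀ q ∈ S, (pGraph S).Reachable p q)
    (hp₀ : p₀ ∈ S) (hleft : ∀ q ∈ S, q ≠ p₀ → p₀.1 < q.1) :
    ∀ k : ℕ, ∀ v u : ℝ × ℝ, (pGraph S).dist p₀ v = k → (pGraph S).dist p₀ u = k + 1 →
      (pGraph S).Adj v u → (Even k → inTL v u) ∧ (¬ Even k → inTL u v) := by
  intro k
  induction k with
  | zero =>
    intro v u hv hu hadj
    refine ⟨fun _ => ?_, fun h => absurd Even.zero h⟩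
    have hvS : v ∈ S := hadj.1
    have huS : u ∈ S := hadj.2.1
    have hvp : p₀ = v := ((hconn p₀ hp₀ v hvS).dist_eq_zero_iff).mp hv
    have hune : u ≠ p₀ := by
      intro he
      exact hadj.ne (hvp ▸ he.symm ▸ rfl)
    have hx : p₀.1 < u.1 := hleft u huS hune
    rcases hadj.2.2 with h | h
    · exact h
    · exact absurd h.1 (by rw [← hvp]; linarith)
  | succ k ih =>
    intro v u hv hu hadj
    have hvS : v ∈ S := hadj.1
    have huS : u ∈ S := hadj.2.1
    obtain ⟨v', hadj', hv'⟩ := exists_prev (hconn p₀ hp₀ v hvS) hv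
    have hv'S : v' ∈ S := hadj'.1
    rcases Nat.even_or_odd k with hk | hk
    · -- k even, k+1 odd : show inTL u v
      have hIH : inTL v' v := (ih v' v hv' hv hadj').1 hk
      refine ⟨fun he => absurd he (by simp [Nat.even_add_one, hk]), fun _ => ?_⟩
      rcases hadj.2.2 with h | h
      · exfalso
        have htl : inTL v' u := ⟨lt_trans hIH.1 h.1, lt_trans h.2 hIH.2⟩
        have hle : (pGraph S).dist p₀ u ≤ k + 1 := by
          have := dist_adj_le (hconn p₀ hp₀ v' hv'S) ⟨hv'S, huS, Or.inl htl⟩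
          omega
        omega
      · exact h
    · -- k odd, k+1 even : show inTL v u
      have hIH : inTL v v' := (ih v' v hv' hv hadj').2 (Nat.not_even_iff_odd.mpr hk)
      refine ⟨fun _ => ?_, fun he => absurd (by simp [Nat.even_add_one, Nat.not_even_iff_odd.mpr hk]) he⟩
      rcases hadj.2.2 with h | h
      · exact h
      · exfalso
        have htl : inTL u v' := ⟨lt_trans h.1 hIH.1, lt_trans hIH.2 h.2⟩
        have hle : (pGraph S).dist p₀ u ≤ k + 1 := by
          have := dist_adj_le (hconn p₀ hp₀ v' hv'S) ⟨hv'S, huS, Or.inr htl⟩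
          omega
        omega

end Stmt9Aux

/-- the last (largest in boundary order) point of layer `k` is adjacent
to every point of layer `k + 1`. -/
theorem stmt9 (S : Finset (ℝ × ℝ)) (hS : DistinctCoords S)
    (hconn : ∀ p ∈ S, ∀ q ∈ S, (pGraph S).Reachable p q)
    (p₀ : ℝ × ℝ) (hp₀ : p₀ ∈ S) (hleft : ∀ q ∈ S, q ≠ p₀ → p₀.1 < q.1)
    (L : ℝ × ℝ → ℕ) (hL : ∀ w, L w = (pGraph S).dist p₀ w)
    (k : ℕ) (lst : ℝ × ℝ) (hlst : lst ∈ S)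
    (hlstb : onTop S lst ∨ onBottom S lst) (hlstL : L lst = k)
    (hmax : ∀ w ∈ S, (onTop S w ∨ onBottom S w) → L w = k → w.1 ≤ lst.1) :
    ∀ u ∈ S, (onTop S u ∨ onBottom S u) → L u = k + 1 → (pGraph S).Adj lst u := by
  classical
  intro u huS hub huL
  have hdu : (pGraph S).dist p₀ u = k + 1 := (hL u).symm.trans huL
  have hdlst : (pGraph S).dist p₀ lst = k := (hL lst).symm.trans hlstL
  have hune : u ≠ lst := by intro h; rw [h, hdlst] at hdu; omega
  have hxne := (hS u huS lst hlst hune).1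
  have hyne := (hS u huS lst hlst hune).2
  have hup₀ : u ≠ p₀ := by
    intro h; rw [h, SimpleGraph.dist_self] at hdu; omega
  have hp₀u : p₀.1 < u.1 := hleft u huS hup₀
  rcases lt_or_gt_of_ne hxne with hxlt | hxgt
  · -- Case I : u.1 < lst.1
    obtain ⟨a, b, haS, hbS, hadj, hax, hbx, hdab, hdbz, hblast⟩ :=
      Stmt9Aux.crossing hS hp₀ huS hlst (hconn p₀ hp₀ lst hlst) hp₀u hxlt (by omega)
    rw [hdlst] at hdbz hblast
    have hane : a ≠ u := by intro h; rw [h, hdu] at hdab; omega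
    have hbne : b ≠ u := by intro h; rw [h, hdu] at hdbz; omega
    have hab : inTL a b := by
      rcases hadj.2.2 with h | h
      · exact h
      · exact absurd h.1 (by linarith)
    rcases hub with hT | hB
    · -- u on top : conclude adjacency
      have hay : a.2 < u.2 := by
        rcases lt_or_gt_of_ne (hS a haS u huS hane).2 with h' | h'
        · exact h'
        · exact absurd ⟨hax, h'⟩ (hT a haS)
      have htlub : inTL u b := ⟨hbx, lt_trans hab.2 hay⟩
      have hge : k ≤ (pGraph S).dist p₀ b := by
        have := Stmt9Aux.dist_adj_le (hconn p₀ hp₀ b hbS)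
          (⟨hbS, huS, Or.inr htlub⟩ : (pGraph S).Adj b u)
        omega
      have hbl : b = lst := hblast (by omega)
      rw [hbl] at htlub
      exact ⟨hlst, huS, Or.inr htlub⟩
    · -- u on bottom : contradiction
      exfalso
      have hby : u.2 < b.2 := by
        rcases lt_or_gt_of_ne (hS b hbS u huS hbne).2 with h' | h'
        · exact absurd ⟨hbx, h'⟩ (hB b hbS)
        · exact h'
      have htlau : inTL a u := ⟨hax, lt_trans hby hab.2⟩
      have := Stmt9Aux.dist_adj_le (hconn p₀ hp₀ a haS)
        (⟨haS, huS, Or.inl htlau⟩ : (pGraph S).Adj a u)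
      omega
  · -- Case II : lst.1 < u.1
    rcases lt_or_gt_of_ne hyne with hylt | hygt
    · exact ⟨hlst, huS, Or.inl ⟨hxgt, hylt⟩⟩
    · exfalso
      obtain ⟨v, hadjvu, hdv⟩ := Stmt9Aux.exists_prev (hconn p₀ hp₀ u huS) hdu
      have hvS : v ∈ S := hadjvu.1
      rcases Nat.even_or_odd k with hk | hk
      · -- k even
        have hvu : inTL v u := (Stmt9Aux.parity hS hconn hp₀ hleft k v u hdv hdu hadjvu).1 hk
        set C := S.filter (fun z => inTL z u ∧ (pGraph S).dist p₀ z ≤ k) with hC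
        have hvC : v ∈ C := Finset.mem_filter.mpr ⟨hvS, hvu, le_of_eq hdv⟩
        obtain ⟨w, hwC, hwmax⟩ := C.exists_max_image (fun z => z.2) ⟨v, hvC⟩
        obtain ⟨hwS, hwTL, hwd⟩ := Finset.mem_filter.mp hwC
        have hdw : (pGraph S).dist p₀ w = k := by
          have := Stmt9Aux.dist_adj_le (hconn p₀ hp₀ w hwS)
            (⟨hwS, huS, Or.inl hwTL⟩ : (pGraph S).Adj w u)
          omega
        have hwTop : onTop S w := by
          intro z hzS hz
          have hzu : inTL z u := ⟨lt_trans hz.1 hwTL.1, lt_trans hwTL.2 hz.2⟩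
          have hdz1 := Stmt9Aux.dist_adj_le (hconn p₀ hp₀ z hzS)
            (⟨hzS, huS, Or.inl hzu⟩ : (pGraph S).Adj z u)
          have hzw : (pGraph S).Adj z w := ⟨hzS, hwS, Or.inl hz⟩
          have hdz2 := Stmt9Aux.dist_adj_le (hconn p₀ hp₀ w hwS) hzw.symm
          by_cases hzk : (pGraph S).dist p₀ z ≤ k
          · have hzC : z ∈ C := Finset.mem_filter.mpr ⟨hzS, hzu, hzk⟩
            have := hwmax z hzC
            linarith [hz.2]
          · have hdzk : (pGraph S).dist p₀ z = k + 1 := by omega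
            have hor := (Stmt9Aux.parity hS hconn hp₀ hleft k w z hdw hdzk hzw.symm).1 hk
            exact absurd hor.1 (not_lt.mpr (le_of_lt hz.1))
        have hwx : w.1 ≤ lst.1 := hmax w hwS (Or.inl hwTop) (by rw [hL w, hdw])
        have hwne : w ≠ lst := by
          intro h
          have h2 := hwTL.2
          rw [h] at h2
          linarith
        have hwx' : w.1 < lst.1 := lt_of_le_of_ne hwx (hS w hwS lst hlst hwne).1
        have hwlst : inTL w lst := ⟨hwx', lt_trans hygt hwTL.2⟩
        rcases hlstb with hT | hB
        · exact hT w hwS hwlst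
        · rcases Nat.eq_zero_or_pos k with hk0 | hkpos
          · have hlp : p₀ = lst := ((hconn p₀ hp₀ lst hlst).dist_eq_zero_iff).mp (by omega)
            have hvp : p₀ = v := ((hconn p₀ hp₀ v hvS).dist_eq_zero_iff).mp (by omega)
            have hveq : v = lst := hvp.symm.trans hlp
            have h2 := hvu.2
            rw [hveq] at h2
            linarith
          · obtain ⟨j, hjk⟩ : ∃ j, k = j + 1 := ⟨k - 1, by omega⟩
            obtain ⟨v₁, hadj1, hdv1⟩ := Stmt9Aux.exists_prev (hconn p₀ hp₀ lst hlst)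
              (show (pGraph S).dist p₀ lst = j + 1 by rw [hdlst, hjk])
            have hv1S : v₁ ∈ S := hadj1.1
            have hodd : ¬ Even j := Nat.even_add_one.mp (by rwa [hjk] at hk)
            have htl := (Stmt9Aux.parity hS hconn hp₀ hleft j v₁ lst hdv1
              (show (pGraph S).dist p₀ lst = j + 1 by rw [hdlst, hjk]) hadj1).2 hodd
            exact hB v₁ hv1S htl
      · -- k odd
        have huv : inTL u v := (Stmt9Aux.parity hS hconn hp₀ hleft k v u hdv hdu hadjvu).2
          (Nat.not_even_iff_odd.mpr hk)
        set C := S.filter (fun z => inTL u z ∧ (pGraph S).dist p₀ z ≤ k) with hC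
        have hvC : v ∈ C := Finset.mem_filter.mpr ⟨hvS, huv, le_of_eq hdv⟩
        obtain ⟨w, hwC, hwmin⟩ := C.exists_min_image (fun z => z.2) ⟨v, hvC⟩
        obtain ⟨hwS, hwTL, hwd⟩ := Finset.mem_filter.mp hwC
        have hdw : (pGraph S).dist p₀ w = k := by
          have := Stmt9Aux.dist_adj_le (hconn p₀ hp₀ w hwS)
            (⟨hwS, huS, Or.inr hwTL⟩ : (pGraph S).Adj w u)
          omega
        have hwBot : onBottom S w := by
          intro z hzS hz
          have hzu : inTL u z := ⟨lt_trans hwTL.1 hz.1, lt_trans hz.2 hwTL.2⟩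
          have hdz1 := Stmt9Aux.dist_adj_le (hconn p₀ hp₀ z hzS)
            (⟨hzS, huS, Or.inr hzu⟩ : (pGraph S).Adj z u)
          have hdz2 := Stmt9Aux.dist_adj_le (hconn p₀ hp₀ w hwS)
            (⟨hwS, hzS, Or.inl hz⟩ : (pGraph S).Adj w z)
          by_cases hzk : (pGraph S).dist p₀ z ≤ k
          · have hzC : z ∈ C := Finset.mem_filter.mpr ⟨hzS, hzu, hzk⟩
            have := hwmin z hzC
            linarith [hz.2]
          · have hdzk : (pGraph S).dist p₀ z = k + 1 := by omega
            have hor := (Stmt9Aux.parity hS hconn hp₀ hleft k w z hdw hdzk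
              (⟨hwS, hzS, Or.inl hz⟩ : (pGraph S).Adj w z)).2 (Nat.not_even_iff_odd.mpr hk)
            exact absurd hor.1 (not_lt.mpr (le_of_lt hz.1))
        have hwx : w.1 ≤ lst.1 := hmax w hwS (Or.inr hwBot) (by rw [hL w, hdw])
        linarith [hwTL.1]
end

section
/- With layers as above, each point t of layer 2k is adjacent to a (possibly empty) prefix of the ordered points of layer 2k+1, and if t < t' are two points of layer 2k then the prefix of layer 2k+1 adjacent to t is contained in the prefix adjacent to t'. -/
open SimpleGraph in
/-- Any point of `S` strictly to the left of a top-boundary point `t` is at distance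
from the leftmost point `p₀` at most `dist p₀ t`. -/
lemma left_of_top_dist_le (S : Finset (ℝ × ℝ)) (hS : DistinctCoords S)
    (hconn : ∀ p ∈ S, ∀ q ∈ S, (pGraph S).Reachable p q)
    (p₀ : ℝ × ℝ) (hp₀ : p₀ ∈ S) (hleft : ∀ q ∈ S, q ≠ p₀ → p₀.1 < q.1)
    (t : ℝ × ℝ) (ht : t ∈ S) (htT : onTop S t)
    (w : ℝ × ℝ) (hw : w ∈ S) (hwt : w.1 < t.1) :
    (pGraph S).dist p₀ w ≤ (pGraph S).dist p₀ t := by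
  set G := pGraph S with hG
  obtain ⟨p, hp⟩ := (hconn p₀ hp₀ t ht).exists_walk_length_eq_dist
  -- every vertex of the walk is in S
  have mem : ∀ i, p.getVert i ∈ S := by
    intro i
    rcases lt_or_ge i p.length with hi | hi
    · exact (p.adj_getVert_succ hi).1
    · rw [p.getVert_of_length_le hi]; exact ht
  -- one-step distance bound
  have key : ∀ u, u ∈ S → ∀ v, G.Adj u v → G.dist p₀ v ≤ G.dist p₀ u + 1 := by
    intro u hu v hadj
    obtain ⟨q, hq⟩ := (hconn p₀ hp₀ u hu).exists_walk_length_eq_dist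
    have := G.dist_le (q.concat hadj)
    rwa [SimpleGraph.Walk.length_concat, hq] at this
  -- distance to the i-th vertex of the walk is at most i
  have hdist : ∀ i, G.dist p₀ (p.getVert i) ≤ i := by
    intro i
    induction i with
    | zero => simp [SimpleGraph.Walk.getVert_zero, SimpleGraph.dist_self]
    | succ n ih =>
      rcases lt_or_ge n p.length with hn | hn
      · exact le_trans (key _ (mem n) _ (p.adj_getVert_succ hn)) (by omega)
      · rw [p.getVert_of_length_le (by omega)]
        rw [p.getVert_of_length_le hn] at ih
        omega
  -- main invariant along the walk
  have inv : ∀ i, i ≤ p.length → (p.getVert i).1 < w.1 ∨ G.dist p₀ w ≤ p.length := by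
    intro i
    induction i with
    | zero =>
      intro _
      rcases eq_or_ne w p₀ with rfl | hne
      · right; simp [SimpleGraph.dist_self]
      · left; rw [p.getVert_zero]; exact hleft w hw hne
    | succ n ih =>
      intro hn1
      have hn : n < p.length := by omega
      rcases ih (le_of_lt hn) with hx | hd
      · set u := p.getVert n with hu
        set v := p.getVert (n + 1) with hv
        have hadj : G.Adj u v := p.adj_getVert_succ hn
        rcases eq_or_ne v w with heq | hne
        · right
          have := hdist (n + 1)
          rw [← hv, heq] at this
          omega
        · rcases lt_or_gt_of_ne ((hS v (mem _) w hw hne).1) with h1 | h1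
          · exact Or.inl h1
          · -- crossing edge: u.1 < w.1 < v.1
            have huv : inTL u v := by
              rcases hadj.2.2 with h | h
              · exact h
              · exact absurd h.1 (by push_neg; exact le_of_lt (lt_trans hx h1))
            have hune : u ≠ w := fun h => lt_irrefl _ (h ▸ hx)
            rcases lt_or_gt_of_ne ((hS u (mem n) w hw hune).2) with h2 | h2
            · -- u.2 < w.2, so w is in TL of v
              have hwv : inTL w v := ⟨h1, lt_trans huv.2 h2⟩
              rcases eq_or_lt_of_le (show n + 1 ≤ p.length from hn1) with hvt | hvt
              · exfalso
                apply htT w hw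
                have hveq : v = t := by rw [hv, hvt, p.getVert_length]
                exact ⟨hwt, hveq ▸ hwv.2⟩
              · right
                have hadjwv : G.Adj v w := ⟨mem _, hw, Or.inr hwv⟩
                have := key _ (mem (n + 1)) _ hadjwv
                have := hdist (n + 1)
                omega
            · -- w.2 < u.2, so u is in TL of w
              right
              have hadjuw : G.Adj u w := ⟨mem n, hw, Or.inl ⟨hx, h2⟩⟩
              have := key _ (mem n) _ hadjuw
              have := hdist n
              omega
      · exact Or.inr hd
  rcases inv p.length le_rfl with hx | hd
  · rw [p.getVert_length] at hx; exact absurd hwt (not_lt.mpr (le_of_lt hx))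
  · omega

/-- each point `t` of layer `2k` (on the top boundary) is adjacent to a
prefix of the ordered points of layer `2k+1` (on the bottom boundary), and these
prefixes grow monotonically along layer `2k`: if `t < t'` in layer `2k` then every
layer-`(2k+1)` neighbour of `t` is also a neighbour of `t'`. -/
theorem stmt10 (S : Finset (ℝ × ℝ)) (hS : DistinctCoords S)
    (hconn : ∀ p ∈ S, ∀ q ∈ S, (pGraph S).Reachable p q)
    (p₀ : ℝ × ℝ) (hp₀ : p₀ ∈ S) (hleft : ∀ q ∈ S, q ≠ p₀ → p₀.1 < q.1)
    (L : ℝ × ℝ → ℕ) (hL : ∀ w, L w = (pGraph S).dist p₀ w)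
    (k : ℕ)
    (t t' : ℝ × ℝ) (ht : t ∈ S) (ht' : t' ∈ S)
    (htT : onTop S t) (ht'T : onTop S t')
    (htL : L t = 2 * k) (ht'L : L t' = 2 * k) (htt' : t.1 < t'.1)
    (b b' : ℝ × ℝ) (hb : b ∈ S) (hb' : b' ∈ S)
    (hbB : onBottom S b) (hb'B : onBottom S b')
    (hbL : L b = 2 * k + 1) (hb'L : L b' = 2 * k + 1) :
    (b'.1 < b.1 → (pGraph S).Adj t b → (pGraph S).Adj t b') ∧
    ((pGraph S).Adj t b → (pGraph S).Adj t' b) := by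
  have hdb : (pGraph S).dist p₀ b = 2 * k + 1 := by rw [← hL]; exact hbL
  have hdb' : (pGraph S).dist p₀ b' = 2 * k + 1 := by rw [← hL]; exact hb'L
  have hdt : (pGraph S).dist p₀ t = 2 * k := by rw [← hL]; exact htL
  have hdt' : (pGraph S).dist p₀ t' = 2 * k := by rw [← hL]; exact ht'L
  -- from Adj t b, extract inTL t b
  have hTL : (pGraph S).Adj t b → inTL t b := by
    intro hadj
    rcases hadj.2.2 with h | h
    · exact h
    · exact absurd h (htT b hb)
  constructor
  · intro hlt hadj
    have htb := hTL hadj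
    have hb'ne : b' ≠ t := by
      intro h; rw [h, hdt] at hdb'; omega
    have hx : t.1 < b'.1 := by
      rcases lt_or_gt_of_ne ((hS b' hb' t ht hb'ne).1) with h1 | h1
      · exfalso
        have := left_of_top_dist_le S hS hconn p₀ hp₀ hleft t ht htT b' hb' h1
        rw [hdb', hdt] at this; omega
      · exact h1
    have hy : b'.2 < t.2 := by
      have hnb : ¬ inTL b' b := hb'B b hb
      have : ¬ (b.2 < b'.2) := fun h => hnb ⟨hlt, h⟩
      calc b'.2 ≤ b.2 := le_of_not_gt this
        _ < t.2 := htb.2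
    exact ⟨ht, hb', Or.inl ⟨hx, hy⟩⟩
  · intro hadj
    have htb := hTL hadj
    have hbne : b ≠ t' := by
      intro h; rw [h, hdt'] at hdb; omega
    have hx : t'.1 < b.1 := by
      rcases lt_or_gt_of_ne ((hS b hb t' ht' hbne).1) with h1 | h1
      · exfalso
        have := left_of_top_dist_le S hS hconn p₀ hp₀ hleft t' ht' ht'T b hb h1
        rw [hdb, hdt'] at this; omega
      · exact h1
    have hy : b.2 < t'.2 := by
      have htne : t ≠ t' := fun h => lt_irrefl _ (h ▸ htt')
      rcases lt_or_gt_of_ne ((hS t ht t' ht' htne).2) with h2 | h2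
      · exact lt_trans htb.2 h2
      · exact absurd ⟨htt', h2⟩ (ht'T t ht)
    exact ⟨ht', hb, Or.inl ⟨hx, hy⟩⟩
end

section
/- There exists a total ordering λ on the boundary points of a connected permutation graph such that for any two boundary points u, v with L(u) < L(v), the distance d(u,v) equals L(v) − L(u) if and only if λ(u) > λ(v). -/
set_option linter.unusedSectionVars false

namespace S11

open SimpleGraph

lemma dist_tri' {V : Type*} {G : SimpleGraph V} {a b c : V}
    (h1 : G.Reachable a b) (h2 : G.Reachable b c) :
    G.dist a c ≤ G.dist a b + G.dist b c := by
  obtain ⟨p, hp⟩ := h1.exists_walk_length_eq_dist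
  obtain ⟨q, hq⟩ := h2.exists_walk_length_eq_dist
  rw [← hp, ← hq, ← SimpleGraph.Walk.length_append]
  exact SimpleGraph.dist_le _

lemma adj_dist' {V : Type*} {G : SimpleGraph V} {a b : V} (h : G.Adj a b) :
    G.dist a b ≤ 1 := by
  simpa using SimpleGraph.dist_le (SimpleGraph.Walk.cons h SimpleGraph.Walk.nil)

lemma parent_lemma {V : Type*} {G : SimpleGraph V} {w z : V} {n : ℕ}
    (hr : G.Reachable w z) (h : G.dist w z = n + 1) :
    ∃ y, G.Adj y z ∧ G.dist w y = n := by
  obtain ⟨p, hp⟩ := hr.exists_walk_length_eq_dist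
  rw [h] at hp
  cases hq : p.reverse with
  | nil =>
      have := congrArg SimpleGraph.Walk.length hq
      simp [hp] at this
  | cons hadj q =>
      rename_i y
      refine ⟨y, hadj.symm, ?_⟩
      have hlen : q.length = n := by
        have := congrArg SimpleGraph.Walk.length hq
        simp [hp] at this
        omega
      have h1 : G.dist w y ≤ n := by
        have := SimpleGraph.dist_le q.reverse
        simpa [hlen, SimpleGraph.dist_comm] using this
      have h2 : G.dist w z ≤ G.dist w y + 1 := by
        calc G.dist w z ≤ G.dist w y + G.dist y z :=
              dist_tri' (q.reverse.reverse.reachable.symm) (hadj.symm.toWalk.reachable)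
          _ ≤ G.dist w y + 1 := by
              have := adj_dist' hadj.symm
              omega
      omega

noncomputable section

variable (S : Finset (ℝ × ℝ)) (p₀ : ℝ × ℝ)

/-- BFS layer of a point. -/
def dd (w : ℝ × ℝ) : ℕ := (pGraph S).dist p₀ w

/-- the layer-relevant coordinate: `x` on even layers, `y` on odd layers. -/
def sig (w : ℝ × ℝ) : ℝ := if Even (dd S p₀ w) then w.1 else w.2

/-- the complementary coordinate. -/
def sig' (w : ℝ × ℝ) : ℝ := if Even (dd S p₀ w) then w.2 else w.1

/-- points of layer `j` reachable from `w` by a "quick" path. -/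
def Qs (w : ℝ × ℝ) (j : ℕ) : Finset (ℝ × ℝ) :=
  S.filter (fun z => dd S p₀ z = j ∧ (pGraph S).dist w z = j - dd S p₀ w)

/-- max of `sig` over `Qs`. -/
def mm (w : ℝ × ℝ) (j : ℕ) : WithBot ℝ := ((Qs S p₀ w j).image (sig S p₀)).max

/-- backwards lexicographic comparison of the sequences `mm`. -/
def Klt (u v : ℝ × ℝ) : Prop :=
  ∃ j, mm S p₀ u j < mm S p₀ v j ∧ ∀ k, j < k → mm S p₀ u k = mm S p₀ v k

open scoped Classical in
/-- boundary points of `S`. -/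
def bdry : Finset (ℝ × ℝ) := S.filter (fun w => onTop S w ∨ onBottom S w)

open scoped Classical in
/-- the ordering function. -/
def lam (w : ℝ × ℝ) : ℕ := ((bdry S).filter (fun z => Klt S p₀ z w)).card

variable {S p₀}

lemma mem_Qs {w z : ℝ × ℝ} {j : ℕ} :
    z ∈ Qs S p₀ w j ↔ z ∈ S ∧ dd S p₀ z = j ∧ (pGraph S).dist w z = j - dd S p₀ w := by
  simp [Qs, Finset.mem_filter, and_assoc]

section hyps

variable (hS : DistinctCoords S)
  (hconn : ∀ p ∈ S, ∀ q ∈ S, (pGraph S).Reachable p q)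
  (hp₀ : p₀ ∈ S) (hleft : ∀ q ∈ S, q ≠ p₀ → p₀.1 < q.1)

include hconn

lemma dist0 {a b : ℝ × ℝ} (ha : a ∈ S) (hb : b ∈ S) :
    (pGraph S).dist a b = 0 ↔ a = b :=
  (hconn a ha b hb).dist_eq_zero_iff

include hp₀

lemma dd_p₀ : dd S p₀ p₀ = 0 := SimpleGraph.dist_self

lemma dd_eq_zero {z : ℝ × ℝ} (hz : z ∈ S) (h : dd S p₀ z = 0) : z = p₀ :=
  ((dist0 hconn hp₀ hz).mp h).symm

omit hp₀

lemma dd_adj {a b : ℝ × ℝ} (hp₀ : p₀ ∈ S) (h : (pGraph S).Adj a b) :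
    dd S p₀ b ≤ dd S p₀ a + 1 := by
  have ha : a ∈ S := h.1
  have := dist_tri' (G := pGraph S) (hconn p₀ hp₀ a ha) h.toWalk.reachable
  have := adj_dist' h
  unfold dd
  omega

lemma dd_parent {z : ℝ × ℝ} {n : ℕ} (hp₀ : p₀ ∈ S) (hz : z ∈ S)
    (h : dd S p₀ z = n + 1) : ∃ y, (pGraph S).Adj y z ∧ dd S p₀ y = n ∧ y ∈ S := by
  obtain ⟨y, hadj, hd⟩ := parent_lemma (hconn p₀ hp₀ z hz) h
  exact ⟨y, hadj, hd, hadj.1⟩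

lemma Qs_self {w : ℝ × ℝ} (hw : w ∈ S) : Qs S p₀ w (dd S p₀ w) = {w} := by
  ext z
  simp only [mem_Qs, Finset.mem_singleton, Nat.sub_self]
  constructor
  · rintro ⟨hz, -, h0⟩
    exact ((dist0 hconn hw hz).mp h0).symm
  · rintro rfl
    exact ⟨hw, rfl, SimpleGraph.dist_self⟩

lemma Qs_empty_of_lt {w : ℝ × ℝ} {j : ℕ} (hw : w ∈ S) (hj : j < dd S p₀ w) :
    Qs S p₀ w j = ∅ := by
  ext z
  simp only [mem_Qs, Finset.notMem_empty, iff_false]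
  rintro ⟨hz, hdz, h0⟩
  rw [Nat.sub_eq_zero_of_le hj.le] at h0
  have := (dist0 hconn hw hz).mp h0
  subst this
  omega

lemma Qs_step_mem {w z' : ℝ × ℝ} {j : ℕ} (hp₀ : p₀ ∈ S) (hw : w ∈ S)
    (hj : dd S p₀ w ≤ j) (h : z' ∈ Qs S p₀ w (j + 1)) :
    ∃ z ∈ Qs S p₀ w j, (pGraph S).Adj z z' := by
  obtain ⟨hz', hdz', hdist⟩ := mem_Qs.mp h
  rw [Nat.succ_sub hj] at hdist
  obtain ⟨y, hadj, hdy⟩ := parent_lemma (hconn w hw z' hz') hdist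
  have hyS : y ∈ S := hadj.1
  have h1 : dd S p₀ y ≤ j := by
    have := dist_tri' (G := pGraph S) (hconn p₀ hp₀ w hw) (hconn w hw y hyS)
    unfold dd at *
    omega
  have h2 : j ≤ dd S p₀ y := by
    have := dd_adj hconn hp₀ hadj
    omega
  refine ⟨y, mem_Qs.mpr ⟨hyS, by omega, by omega⟩, hadj⟩

lemma Qs_step_adj {w z z' : ℝ × ℝ} {j : ℕ} (hp₀ : p₀ ∈ S) (hw : w ∈ S)
    (hj : dd S p₀ w ≤ j) (hz : z ∈ Qs S p₀ w j) (hadj : (pGraph S).Adj z z')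
    (hdz' : dd S p₀ z' = j + 1) : z' ∈ Qs S p₀ w (j + 1) := by
  obtain ⟨hzS, hdz, hdist⟩ := mem_Qs.mp hz
  have hz'S : z' ∈ S := hadj.2.1
  have hle : (pGraph S).dist w z' ≤ j + 1 - dd S p₀ w := by
    have := dist_tri' (G := pGraph S) (hconn w hw z hzS) hadj.toWalk.reachable
    have := adj_dist' hadj
    omega
  have hge : j + 1 - dd S p₀ w ≤ (pGraph S).dist w z' := by
    have := dist_tri' (G := pGraph S) (hconn p₀ hp₀ w hw) (hconn w hw z' hz'S)
    unfold dd at *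
    omega
  exact mem_Qs.mpr ⟨hz'S, hdz', le_antisymm hle hge⟩

end hyps

end
end S11
namespace S11
noncomputable section
variable {S : Finset (ℝ × ℝ)} {p₀ : ℝ × ℝ}

section geom

variable (hS : DistinctCoords S)
  (hconn : ∀ p ∈ S, ∀ q ∈ S, (pGraph S).Reachable p q)
  (hp₀ : p₀ ∈ S) (hleft : ∀ q ∈ S, q ≠ p₀ → p₀.1 < q.1)

include hS hconn hp₀ hleft

/-- Master invariant: a point in an even layer has smaller x-coordinate than every point
in any later layer; a point in an odd layer has smaller y-coordinate. -/
lemma MI : ∀ j (z w : ℝ × ℝ), z ∈ S → w ∈ S → dd S p₀ z = j → j < dd S p₀ w →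
    (Even j → z.1 < w.1) ∧ (¬Even j → z.2 < w.2) := by
  intro j
  induction j using Nat.strong_induction_on with
  | _ j ih =>
    rcases j with _ | (_ | k)
    · -- j = 0
      intro z w hz hw hdz hdw
      have hzp : z = p₀ := dd_eq_zero hconn hp₀ hz hdz
      have hwne : w ≠ p₀ := by
        intro h
        rw [h, dd_p₀ hconn hp₀] at hdw; omega
      exact ⟨fun _ => by rw [hzp]; exact hleft w hw hwne, fun h => absurd Even.zero h⟩
    · -- j = 1
      intro z w hz hw hdz hdw
      obtain ⟨y, hadj, hdy, hyS⟩ := dd_parent hconn hp₀ hz hdz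
      have hyp : y = p₀ := dd_eq_zero hconn hp₀ hyS hdy
      rw [hyp] at hadj
      have hzne : z ≠ p₀ := by
        intro h
        rw [h, dd_p₀ hconn hp₀] at hdz; omega
      rcases hadj.2.2 with ⟨hx, hy2⟩ | ⟨hx, -⟩
      · refine ⟨fun h => absurd h Nat.not_even_one, fun _ => ?_⟩
        by_contra hcon
        push_neg at hcon
        have hne : z ≠ w := by
          intro h; subst h; omega
        have hlt : w.2 < z.2 :=
          lt_of_le_of_ne hcon (fun h => (hS z hz w hw hne).2 h.symm)
        have hwne : w ≠ p₀ := by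
          intro h
          rw [h, dd_p₀ hconn hp₀] at hdw; omega
        have hadj2 : (pGraph S).Adj p₀ w :=
          ⟨hp₀, hw, Or.inl ⟨hleft w hw hwne, lt_trans hlt hy2⟩⟩
        have := dd_adj hconn hp₀ hadj2
        rw [dd_p₀ hconn hp₀] at this
        omega
      · exact absurd hx (not_lt.mpr (hleft z hz hzne).le)
    · -- j = k + 2
      intro z w hz hw hdz hdw
      obtain ⟨y, hadj, hdy, hyS⟩ := dd_parent hconn hp₀ hz hdz
      have IH1 := ih (k + 1) (by omega) y z hyS hz hdy (by omega)
      have IH2 := ih (k + 1) (by omega) y w hyS hw hdy (by omega)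
      have hnez : z ≠ w := by
        intro h; subst h; omega
      by_cases hpar : Even (k + 2)
      · have hodd : ¬Even (k + 1) := Nat.even_add_one.mp hpar
        have h1 : y.2 < z.2 := IH1.2 hodd
        have hzy : z.1 < y.1 := by
          rcases hadj.2.2 with ⟨-, h2⟩ | ⟨h2, -⟩
          · linarith
          · exact h2
        refine ⟨fun _ => ?_, fun h => absurd hpar h⟩
        by_contra hcon
        push_neg at hcon
        have hltx : w.1 < z.1 :=
          lt_of_le_of_ne hcon (fun h => (hS z hz w hw hnez).1 h.symm)
        have h2 : y.2 < w.2 := IH2.2 hodd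
        have hadj2 : (pGraph S).Adj w y := ⟨hw, hyS, Or.inl ⟨lt_trans hltx hzy, h2⟩⟩
        have := dd_adj hconn hp₀ hadj2.symm
        omega
      · have heven : Even (k + 1) := by
          by_contra h
          exact hpar (Nat.even_add_one.mpr h)
        have h1 : y.1 < z.1 := IH1.1 heven
        have hzy : z.2 < y.2 := by
          rcases hadj.2.2 with ⟨-, h2⟩ | ⟨h2, -⟩
          · exact h2
          · linarith
        refine ⟨fun h => absurd h hpar, fun _ => ?_⟩
        by_contra hcon
        push_neg at hcon
        have hlty : w.2 < z.2 :=
          lt_of_le_of_ne hcon (fun h => (hS z hz w hw hnez).2 h.symm)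
        have h2 : y.1 < w.1 := IH2.1 heven
        have hadj2 : (pGraph S).Adj y w := ⟨hyS, hw, Or.inl ⟨h2, lt_trans hlty hzy⟩⟩
        have := dd_adj hconn hp₀ hadj2
        omega

/-- adjacency between consecutive layers is characterized by a coordinate comparison. -/
lemma adj_char {z w : ℝ × ℝ} {j : ℕ} (hz : z ∈ S) (hw : w ∈ S)
    (hdz : dd S p₀ z = j) (hdw : dd S p₀ w = j + 1) :
    (pGraph S).Adj z w ↔ sig S p₀ w < sig' S p₀ z := by
  have hMI := MI hS hconn hp₀ hleft j z w hz hw hdz (by omega)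
  by_cases hpar : Even j
  · have hx : z.1 < w.1 := hMI.1 hpar
    have hsw : sig S p₀ w = w.2 := by
      simp [sig, hdw, Nat.even_add_one, hpar]
    have hsz : sig' S p₀ z = z.2 := by
      simp [sig', hdz, hpar]
    rw [hsw, hsz]
    constructor
    · rintro ⟨-, -, ⟨-, h⟩ | ⟨h, -⟩⟩
      · exact h
      · linarith
    · intro h
      exact ⟨hz, hw, Or.inl ⟨hx, h⟩⟩
  · have hy : z.2 < w.2 := hMI.2 hpar
    have hsw : sig S p₀ w = w.1 := by
      simp [sig, hdw, Nat.even_add_one, hpar]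
    have hsz : sig' S p₀ z = z.1 := by
      simp [sig', hdz, hpar]
    rw [hsw, hsz]
    constructor
    · rintro ⟨-, -, ⟨-, h⟩ | ⟨h, -⟩⟩
      · linarith
      · exact h
    · intro h
      exact ⟨hz, hw, Or.inr ⟨h, hy⟩⟩

lemma not_onTop_of_odd {v : ℝ × ℝ} (hv : v ∈ S) (hodd : ¬Even (dd S p₀ v)) :
    ¬onTop S v := by
  intro hT
  obtain ⟨k, hk⟩ : ∃ k, dd S p₀ v = k + 1 := by
    rcases Nat.eq_zero_or_pos (dd S p₀ v) with h0 | hpos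
    · exact absurd (h0 ▸ Even.zero) hodd
    · exact ⟨dd S p₀ v - 1, by omega⟩
  obtain ⟨y, hadj, hdy, hyS⟩ := dd_parent hconn hp₀ hv hk
  have hpar : Even k := by
    rw [hk, Nat.even_add_one] at hodd
    exact not_not.mp hodd
  have hchar := (adj_char hS hconn hp₀ hleft hyS hv hdy (by omega)).mp hadj
  have hsv : sig S p₀ v = v.2 := by simp [sig, hodd]
  have hsy : sig' S p₀ y = y.2 := by simp [sig', hdy, hpar]
  rw [hsv, hsy] at hchar
  have h2 : y.1 < v.1 := (MI hS hconn hp₀ hleft k y v hyS hv hdy (by omega)).1 hpar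
  exact hT y hyS ⟨h2, hchar⟩

lemma not_onBottom_of_even {v : ℝ × ℝ} (hv : v ∈ S) (heven : Even (dd S p₀ v))
    (hne : dd S p₀ v ≠ 0) : ¬onBottom S v := by
  intro hB
  obtain ⟨k, hk⟩ : ∃ k, dd S p₀ v = k + 1 := ⟨dd S p₀ v - 1, by omega⟩
  obtain ⟨y, hadj, hdy, hyS⟩ := dd_parent hconn hp₀ hv hk
  have hpar : ¬Even k := by
    rw [hk, Nat.even_add_one] at heven
    exact heven
  have hchar := (adj_char hS hconn hp₀ hleft hyS hv hdy (by omega)).mp hadj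
  have hsv : sig S p₀ v = v.1 := by simp [sig, heven]
  have hsy : sig' S p₀ y = y.1 := by simp [sig', hdy, hpar]
  rw [hsv, hsy] at hchar
  have h2 : y.2 < v.2 := (MI hS hconn hp₀ hleft k y v hyS hv hdy (by omega)).2 hpar
  exact hB y hyS ⟨hchar, h2⟩

omit hS hconn hp₀ in
lemma onTop_p₀ : onTop S p₀ := by
  intro q hq ⟨h1, _⟩
  by_cases h : q = p₀
  · subst h; exact lt_irrefl _ h1
  · exact absurd h1 (not_lt.mpr (hleft q hq h).le)

/-- same-layer comparison against a boundary point. -/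
lemma sig'_lt {u v : ℝ × ℝ} (hu : u ∈ S) (hv : v ∈ S)
    (hb : onTop S v ∨ onBottom S v) (hd : dd S p₀ u = dd S p₀ v) (hne : u ≠ v)
    (hlt : sig S p₀ u < sig S p₀ v) : sig' S p₀ u < sig' S p₀ v := by
  by_cases hpar : Even (dd S p₀ v)
  · have hu1 : u.1 < v.1 := by
      have h1 : sig S p₀ u = u.1 := by simp [sig, hd, hpar]
      have h2 : sig S p₀ v = v.1 := by simp [sig, hpar]
      rwa [h1, h2] at hlt
    have hT : onTop S v := by
      rcases Nat.eq_zero_or_pos (dd S p₀ v) with h0 | hpos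
    -- v = p₀
      · have : v = p₀ := dd_eq_zero hconn hp₀ hv h0
        subst this
        exact onTop_p₀ hleft
      · rcases hb with h | h
        · exact h
        · exact absurd h (not_onBottom_of_even hS hconn hp₀ hleft hv hpar (by omega))
    have g1 : sig' S p₀ u = u.2 := by simp [sig', hd, hpar]
    have g2 : sig' S p₀ v = v.2 := by simp [sig', hpar]
    rw [g1, g2]
    rcases lt_trichotomy u.2 v.2 with h | h | h
    · exact h
    · exact absurd h ((hS u hu v hv hne).2)
    · exact absurd ⟨hu1, h⟩ (hT u hu)
  · have hu2 : u.2 < v.2 := by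
      have h1 : sig S p₀ u = u.2 := by simp [sig, hd, hpar]
      have h2 : sig S p₀ v = v.2 := by simp [sig, hpar]
      rwa [h1, h2] at hlt
    have hB : onBottom S v := by
      rcases hb with h | h
      · exact absurd h (not_onTop_of_odd hS hconn hp₀ hleft hv hpar)
      · exact h
    have g1 : sig' S p₀ u = u.1 := by simp [sig', hd, hpar]
    have g2 : sig' S p₀ v = v.1 := by simp [sig', hpar]
    rw [g1, g2]
    rcases lt_trichotomy u.1 v.1 with h | h | h
    · exact h
    · exact absurd h ((hS u hu v hv hne).1)
    · exact absurd ⟨h, hu2⟩ (hB u hu)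

omit hconn hp₀ hleft in
lemma sig_inj {u v : ℝ × ℝ} (hu : u ∈ S) (hv : v ∈ S) (hd : dd S p₀ u = dd S p₀ v)
    (h : sig S p₀ u = sig S p₀ v) : u = v := by
  by_contra hne
  by_cases hpar : Even (dd S p₀ v)
  · have h1 : sig S p₀ u = u.1 := by simp [sig, hd, hpar]
    have h2 : sig S p₀ v = v.1 := by simp [sig, hpar]
    rw [h1, h2] at h
    exact (hS u hu v hv hne).1 h
  · have h1 : sig S p₀ u = u.2 := by simp [sig, hd, hpar]
    have h2 : sig S p₀ v = v.2 := by simp [sig, hpar]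
    rw [h1, h2] at h
    exact (hS u hu v hv hne).2 h

end geom
end
end S11
namespace S11
noncomputable section
variable {S : Finset (ℝ × ℝ)} {p₀ : ℝ × ℝ}

section main

variable (hS : DistinctCoords S)
  (hconn : ∀ p ∈ S, ∀ q ∈ S, (pGraph S).Reachable p q)
  (hp₀ : p₀ ∈ S) (hleft : ∀ q ∈ S, q ≠ p₀ → p₀.1 < q.1)

include hS hconn hp₀ hleft

lemma Qs_prefix {w z' : ℝ × ℝ} {j : ℕ} (hw : w ∈ S) (hj : dd S p₀ w ≤ j)
    (hz' : z' ∈ S) (hdz' : dd S p₀ z' = j + 1) :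
    z' ∈ Qs S p₀ w (j + 1) ↔ ∃ z ∈ Qs S p₀ w j, sig S p₀ z' < sig' S p₀ z := by
  constructor
  · intro h
    obtain ⟨z, hzmem, hadj⟩ := Qs_step_mem hconn hp₀ hw hj h
    obtain ⟨hzS, hdz, -⟩ := mem_Qs.mp hzmem
    exact ⟨z, hzmem, (adj_char hS hconn hp₀ hleft hzS hz' hdz hdz').mp hadj⟩
  · rintro ⟨z, hzmem, hlt⟩
    obtain ⟨hzS, hdz, -⟩ := mem_Qs.mp hzmem
    exact Qs_step_adj hconn hp₀ hw hj hzmem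
      ((adj_char hS hconn hp₀ hleft hzS hz' hdz hdz').mpr hlt) hdz'

omit hS hleft in
lemma quick_subset {u v : ℝ × ℝ} (hu : u ∈ S) (hv : v ∈ S)
    (hle : dd S p₀ u ≤ dd S p₀ v) (hq : v ∈ Qs S p₀ u (dd S p₀ v)) :
    ∀ j, dd S p₀ v ≤ j → Qs S p₀ v j ⊆ Qs S p₀ u j := by
  intro j hj
  induction j, hj using Nat.le_induction with
  | base =>
      rw [Qs_self hconn hv]
      intro z hz
      rw [Finset.mem_singleton] at hz
      subst hz
      exact hq
  | succ j hj ihsub =>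
      intro z' hz'
      obtain ⟨z, hzm, hadj⟩ := Qs_step_mem hconn hp₀ hv hj hz'
      exact Qs_step_adj hconn hp₀ hu (le_trans hle hj) (ihsub hzm) hadj
        (mem_Qs.mp hz').2.1

lemma nonquick_below {u v : ℝ × ℝ} (hu : u ∈ S) (hv : v ∈ S)
    (hb : onTop S v ∨ onBottom S v) (hlt : dd S p₀ u < dd S p₀ v)
    (hnq : v ∉ Qs S p₀ u (dd S p₀ v)) :
    ∀ z ∈ Qs S p₀ u (dd S p₀ v),
      sig S p₀ z < sig S p₀ v ∧ sig' S p₀ z < sig' S p₀ v := by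
  intro z hz
  obtain ⟨k, hk⟩ : ∃ k, dd S p₀ v = k + 1 := ⟨dd S p₀ v - 1, by omega⟩
  obtain ⟨hzS, hdz, -⟩ := mem_Qs.mp hz
  have hz' : z ∈ Qs S p₀ u (k + 1) := by rwa [hk] at hz
  obtain ⟨z₁, hz₁, hlt1⟩ := (Qs_prefix hS hconn hp₀ hleft hu (by omega) hzS (by omega)).mp hz'
  have h1 : sig S p₀ z < sig S p₀ v := by
    rcases lt_trichotomy (sig S p₀ z) (sig S p₀ v) with h | h | h
    · exact h
    · have : z = v := sig_inj hS hzS hv (by omega) h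
      subst this
      exact absurd hz hnq
    · have hvin : v ∈ Qs S p₀ u (k + 1) :=
        (Qs_prefix hS hconn hp₀ hleft hu (by omega) hv (by omega)).mpr
          ⟨z₁, hz₁, lt_trans h hlt1⟩
      rw [← hk] at hvin
      exact absurd hvin hnq
  have hnez : z ≠ v := by
    intro h
    rw [h] at h1
    exact lt_irrefl _ h1
  exact ⟨h1, sig'_lt hS hconn hp₀ hleft hzS hv hb (by omega) hnez h1⟩

lemma nonquick_subset {u v : ℝ × ℝ} (hu : u ∈ S) (hv : v ∈ S)
    (hb : onTop S v ∨ onBottom S v) (hlt : dd S p₀ u < dd S p₀ v)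
    (hnq : v ∉ Qs S p₀ u (dd S p₀ v)) :
    ∀ j, dd S p₀ v + 1 ≤ j → Qs S p₀ u j ⊆ Qs S p₀ v j := by
  intro j hj
  induction j, hj using Nat.le_induction with
  | base =>
      intro z'' hz''
      obtain ⟨hz''S, hdz'', -⟩ := mem_Qs.mp hz''
      obtain ⟨z, hzm, hlt2⟩ :=
        (Qs_prefix hS hconn hp₀ hleft hu (by omega) hz''S hdz'').mp hz''
      have h2 := (nonquick_below hS hconn hp₀ hleft hu hv hb hlt hnq z hzm).2
      refine (Qs_prefix hS hconn hp₀ hleft hv le_rfl hz''S hdz'').mpr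
        ⟨v, ?_, lt_trans hlt2 h2⟩
      rw [Qs_self hconn hv]
      exact Finset.mem_singleton_self v
  | succ j hj ihsub =>
      intro z' hz'
      obtain ⟨z, hzm, hadj⟩ := Qs_step_mem hconn hp₀ hu (by omega) hz'
      exact Qs_step_adj hconn hp₀ hv (by omega) (ihsub hzm) hadj (mem_Qs.mp hz').2.1

omit hS hconn hp₀ hleft in
lemma mm_mono {u v : ℝ × ℝ} {j : ℕ} (h : Qs S p₀ u j ⊆ Qs S p₀ v j) :
    mm S p₀ u j ≤ mm S p₀ v j :=
  Finset.max_mono (Finset.image_subset_image h)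

omit hS hp₀ hleft in
lemma mm_bot {w : ℝ × ℝ} {j : ℕ} (hw : w ∈ S) (hj : j < dd S p₀ w) :
    mm S p₀ w j = ⊥ := by
  unfold mm
  rw [Qs_empty_of_lt hconn hw hj]
  simp

omit hS hp₀ hleft in
lemma mm_self {w : ℝ × ℝ} (hw : w ∈ S) :
    mm S p₀ w (dd S p₀ w) = (sig S p₀ w : WithBot ℝ) := by
  unfold mm
  rw [Qs_self hconn hw]
  simp

omit hS hconn hp₀ hleft in
lemma mm_bot_of_no_layer {w : ℝ × ℝ} {j : ℕ} (h : ∀ z ∈ S, dd S p₀ z ≠ j) :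
    mm S p₀ w j = ⊥ := by
  unfold mm
  have : Qs S p₀ w j = ∅ := by
    apply Finset.eq_empty_of_forall_notMem
    intro z hz
    exact h z (mem_Qs.mp hz).1 (mem_Qs.mp hz).2.1
  rw [this]
  simp

lemma mm_lt_nonquick {u v : ℝ × ℝ} (hu : u ∈ S) (hv : v ∈ S)
    (hb : onTop S v ∨ onBottom S v) (hlt : dd S p₀ u < dd S p₀ v)
    (hnq : v ∉ Qs S p₀ u (dd S p₀ v)) :
    mm S p₀ u (dd S p₀ v) < mm S p₀ v (dd S p₀ v) := by
  rw [mm_self hconn hv]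
  cases hmax : ((Qs S p₀ u (dd S p₀ v)).image (sig S p₀)).max with
  | bot =>
      unfold mm
      rw [hmax]
      exact WithBot.bot_lt_coe _
  | coe a =>
      obtain ⟨z, hz, rfl⟩ := Finset.mem_image.mp (Finset.mem_of_max hmax)
      have := (nonquick_below hS hconn hp₀ hleft hu hv hb hlt hnq z hz).1
      unfold mm
      rw [hmax]
      exact_mod_cast this

omit hS hconn hp₀ hleft in
lemma Klt_construct {u v : ℝ × ℝ} {B : ℕ} (hB : ∀ z ∈ S, dd S p₀ z ≤ B) {j₀ : ℕ}
    (hj₀ : j₀ ≤ B) (h0 : mm S p₀ u j₀ ≠ mm S p₀ v j₀)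
    (hle : ∀ k, j₀ ≤ k → mm S p₀ u k ≤ mm S p₀ v k) : Klt S p₀ u v := by
  classical
  set D := (Finset.range (B + 1)).filter
    (fun k => mm S p₀ u k ≠ mm S p₀ v k) with hD
  have hmemD : ∀ k, k ∈ D ↔ k ≤ B ∧ mm S p₀ u k ≠ mm S p₀ v k := by
    intro k
    simp [hD, Finset.mem_filter, Finset.mem_range, Nat.lt_succ_iff]
  have hne : D.Nonempty := ⟨j₀, (hmemD j₀).mpr ⟨hj₀, h0⟩⟩
  have hjD := D.max'_mem hne
  rw [hmemD] at hjD
  have hjge : j₀ ≤ D.max' hne := Finset.le_max' D j₀ ((hmemD j₀).mpr ⟨hj₀, h0⟩)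
  refine ⟨D.max' hne, lt_of_le_of_ne (hle _ hjge) hjD.2, ?_⟩
  intro k hk
  by_cases hkB : k ≤ B
  · by_contra hne2
    have := Finset.le_max' D k ((hmemD k).mpr ⟨hkB, hne2⟩)
    omega
  · have hk' : ∀ z ∈ S, dd S p₀ z ≠ k := fun z hz h => hkB (h ▸ hB z hz)
    rw [mm_bot_of_no_layer hk', mm_bot_of_no_layer hk']

omit hS hconn hp₀ hleft in
lemma Klt_total {u v : ℝ × ℝ} {B : ℕ} (hB : ∀ z ∈ S, dd S p₀ z ≤ B) {j₀ : ℕ}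
    (hj₀ : j₀ ≤ B) (h0 : mm S p₀ u j₀ ≠ mm S p₀ v j₀) :
    Klt S p₀ u v ∨ Klt S p₀ v u := by
  classical
  set D := (Finset.range (B + 1)).filter
    (fun k => mm S p₀ u k ≠ mm S p₀ v k) with hD
  have hmemD : ∀ k, k ∈ D ↔ k ≤ B ∧ mm S p₀ u k ≠ mm S p₀ v k := by
    intro k
    simp [hD, Finset.mem_filter, Finset.mem_range, Nat.lt_succ_iff]
  have hne : D.Nonempty := ⟨j₀, (hmemD j₀).mpr ⟨hj₀, h0⟩⟩
  have hjD := D.max'_mem hne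
  rw [hmemD] at hjD
  have heqs : ∀ k, D.max' hne < k → mm S p₀ u k = mm S p₀ v k := by
    intro k hk
    by_cases hkB : k ≤ B
    · by_contra hne2
      have := Finset.le_max' D k ((hmemD k).mpr ⟨hkB, hne2⟩)
      omega
    · have hk' : ∀ z ∈ S, dd S p₀ z ≠ k := fun z hz h => hkB (h ▸ hB z hz)
      rw [mm_bot_of_no_layer hk', mm_bot_of_no_layer hk']
  rcases lt_or_gt_of_ne hjD.2 with h | h
  · exact Or.inl ⟨D.max' hne, h, heqs⟩
  · exact Or.inr ⟨D.max' hne, h, fun k hk => (heqs k hk).symm⟩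

omit hS hconn hp₀ hleft in
lemma Klt_trans {a b c : ℝ × ℝ} (h1 : Klt S p₀ a b) (h2 : Klt S p₀ b c) :
    Klt S p₀ a c := by
  obtain ⟨j1, hlt1, heq1⟩ := h1
  obtain ⟨j2, hlt2, heq2⟩ := h2
  rcases lt_trichotomy j1 j2 with h | h | h
  · exact ⟨j2, (heq1 j2 h) ▸ hlt2, fun k hk => (heq1 k (by omega)).trans (heq2 k hk)⟩
  · subst h
    exact ⟨j1, lt_trans hlt1 hlt2, fun k hk => (heq1 k hk).trans (heq2 k hk)⟩
  · exact ⟨j1, hlt1.trans_eq (heq2 j1 h), fun k hk => (heq1 k hk).trans (heq2 k (by omega))⟩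

omit hS hconn hp₀ hleft in
lemma Klt_irrefl {a : ℝ × ℝ} (h : Klt S p₀ a a) : False := by
  obtain ⟨j, hlt, -⟩ := h
  exact lt_irrefl _ hlt

omit hS hconn hp₀ hleft in
lemma lam_lt {a b : ℝ × ℝ} (ha : a ∈ bdry S) (h : Klt S p₀ a b) :
    lam S p₀ a < lam S p₀ b := by
  classical
  unfold lam
  apply Finset.card_lt_card
  have hsub : (bdry S).filter (fun z => Klt S p₀ z a) ⊆
      (bdry S).filter (fun z => Klt S p₀ z b) := by
    intro z hz
    simp only [Finset.mem_filter] at hz ⊢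
    exact ⟨hz.1, Klt_trans hz.2 h⟩
  rw [Finset.ssubset_iff_of_subset hsub]
  refine ⟨a, ?_, ?_⟩
  · simp only [Finset.mem_filter]
    exact ⟨ha, h⟩
  · simp only [Finset.mem_filter, not_and]
    exact fun _ => fun hc => Klt_irrefl hc

end main
end
end S11


/-- there is a total ordering `lam` of the boundary points such that for
boundary points `u, v` with `L u < L v`, the distance `d(u,v)` equals `L v − L u`
(a quick path exists) iff `lam u > lam v`. -/
theorem stmt11 (S : Finset (ℝ × ℝ)) (hS : DistinctCoords S)
    (hconn : ∀ p ∈ S, ∀ q ∈ S, (pGraph S).Reachable p q)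
    (p₀ : ℝ × ℝ) (hp₀ : p₀ ∈ S) (hleft : ∀ q ∈ S, q ≠ p₀ → p₀.1 < q.1)
    (L : ℝ × ℝ → ℕ) (hL : ∀ w, L w = (pGraph S).dist p₀ w) :
    ∃ lam : ℝ × ℝ → ℕ,
      (∀ u ∈ S, ∀ v ∈ S, (onTop S u ∨ onBottom S u) → (onTop S v ∨ onBottom S v) →
        u ≠ v → lam u ≠ lam v) ∧
      (∀ u ∈ S, ∀ v ∈ S, (onTop S u ∨ onBottom S u) → (onTop S v ∨ onBottom S v) →
        L u < L v → ((pGraph S).dist u v = L v - L u ↔ lam v < lam u)) := by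
  classical
  refine ⟨S11.lam S p₀, ?_, ?_⟩
  · -- injectivity on boundary points
    intro u hu v hv hbu hbv hne
    have huB : u ∈ S11.bdry S := by
      unfold S11.bdry
      simp only [Finset.mem_filter]
      exact ⟨hu, hbu⟩
    have hvB : v ∈ S11.bdry S := by
      unfold S11.bdry
      simp only [Finset.mem_filter]
      exact ⟨hv, hbv⟩
    set B := (S.image (S11.dd S p₀)).max' ⟨S11.dd S p₀ p₀, Finset.mem_image_of_mem _ hp₀⟩
      with hBdef
    have hB : ∀ z ∈ S, S11.dd S p₀ z ≤ B :=
      fun z hz => Finset.le_max' _ _ (Finset.mem_image_of_mem _ hz)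
    have htot : S11.Klt S p₀ u v ∨ S11.Klt S p₀ v u := by
      rcases lt_trichotomy (S11.dd S p₀ u) (S11.dd S p₀ v) with hd | hd | hd
      · refine S11.Klt_total hB (hB u hu) ?_
        rw [S11.mm_self hconn hu, S11.mm_bot hconn hv hd]
        exact WithBot.coe_ne_bot
      · refine S11.Klt_total hB (hB u hu) ?_
        rw [S11.mm_self hconn hu]
        conv_rhs => rw [hd]
        rw [S11.mm_self hconn hv]
        intro h
        exact hne (S11.sig_inj hS hu hv hd (WithBot.coe_injective h))
      · refine S11.Klt_total hB (hB v hv) ?_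
        rw [S11.mm_bot hconn hu hd, S11.mm_self hconn hv]
        exact WithBot.bot_ne_coe
    rcases htot with h | h
    · exact Nat.ne_of_lt (S11.lam_lt huB h)
    · exact (Nat.ne_of_lt (S11.lam_lt hvB h)).symm
  · -- the quick-path iff
    intro u hu v hv hbu hbv hLuv
    rw [hL u, hL v] at hLuv ⊢
    change S11.dd S p₀ u < S11.dd S p₀ v at hLuv
    have huB : u ∈ S11.bdry S := by
      unfold S11.bdry
      simp only [Finset.mem_filter]
      exact ⟨hu, hbu⟩
    have hvB : v ∈ S11.bdry S := by
      unfold S11.bdry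
      simp only [Finset.mem_filter]
      exact ⟨hv, hbv⟩
    set B := (S.image (S11.dd S p₀)).max' ⟨S11.dd S p₀ p₀, Finset.mem_image_of_mem _ hp₀⟩
      with hBdef
    have hB : ∀ z ∈ S, S11.dd S p₀ z ≤ B :=
      fun z hz => Finset.le_max' _ _ (Finset.mem_image_of_mem _ hz)
    constructor
    · intro hdist
      have hq : v ∈ S11.Qs S p₀ u (S11.dd S p₀ v) :=
        S11.mem_Qs.mpr ⟨hv, rfl, hdist⟩
      have hKlt : S11.Klt S p₀ v u := by
        refine S11.Klt_construct hB (hB u hu) ?_ ?_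
        · rw [S11.mm_bot hconn hv hLuv, S11.mm_self hconn hu]
          exact WithBot.bot_ne_coe
        · intro k hk
          by_cases hkv : S11.dd S p₀ v ≤ k
          · exact S11.mm_mono (S11.quick_subset hconn hp₀ hu hv hLuv.le hq k hkv)
          · rw [S11.mm_bot hconn hv (by omega)]
            exact bot_le
      exact S11.lam_lt hvB hKlt
    · intro hlam
      by_contra hdist
      have hnq : v ∉ S11.Qs S p₀ u (S11.dd S p₀ v) := by
        intro hmem
        exact hdist (S11.mem_Qs.mp hmem).2.2
      have hKlt : S11.Klt S p₀ u v := by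
        refine S11.Klt_construct hB (hB v hv) ?_ ?_
        · exact ne_of_lt (S11.mm_lt_nonquick hS hconn hp₀ hleft hu hv hbv hLuv hnq)
        · intro k hk
          rcases Nat.eq_or_lt_of_le hk with h | h
          · rw [← h]
            exact (S11.mm_lt_nonquick hS hconn hp₀ hleft hu hv hbv hLuv hnq).le
          · exact S11.mm_mono
              (S11.nonquick_subset hS hconn hp₀ hleft hu hv hbv hLuv hnq k h)
      have := S11.lam_lt huB hKlt
      omega
end

section
/- For a non-boundary vertex v, the set of its neighbors on the bottom boundary forms a contiguous interval in the boundary order of bottom-boundary points, and similarly for the top boundary. -/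
/-- for a non-boundary vertex `v`, the neighbours of `v` on the bottom
boundary form a contiguous interval of the bottom boundary in boundary order, and
similarly for the top boundary. -/
theorem stmt13 (S : Finset (ℝ × ℝ)) (hS : DistinctCoords S)
    (hconn : ∀ p ∈ S, ∀ q ∈ S, (pGraph S).Reachable p q)
    (v : ℝ × ℝ) (hv : v ∈ S) (hvnb : ¬ onTop S v ∧ ¬ onBottom S v) :
    (∀ a ∈ S, ∀ b ∈ S, ∀ c ∈ S,
      onBottom S a → onBottom S b → onBottom S c →
      a.1 < b.1 → b.1 < c.1 →
      (pGraph S).Adj v a → (pGraph S).Adj v c → (pGraph S).Adj v b) ∧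
    (∀ a ∈ S, ∀ b ∈ S, ∀ c ∈ S,
      onTop S a → onTop S b → onTop S c →
      a.1 < b.1 → b.1 < c.1 →
      (pGraph S).Adj v a → (pGraph S).Adj v c → (pGraph S).Adj v b) := by
  constructor
  · intro a ha b hb c hc hba hbb hbc hab hbc' hva hvc
    obtain ⟨-, -, hva'⟩ := hva
    obtain ⟨-, -, hvc'⟩ := hvc
    have h1 : inTL v a := hva'.resolve_right (hba v hv)
    have h2 : inTL v c := hvc'.resolve_right (hbc v hv)
    have hb2 : b.2 ≤ c.2 := by
      by_contra h
      exact hbb c hc ⟨hbc', lt_of_not_ge h⟩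
    exact ⟨hv, hb, Or.inl ⟨h1.1.trans hab, lt_of_le_of_lt hb2 h2.2⟩⟩
  · intro a ha b hb c hc hba hbb hbc hab hbc' hva hvc
    obtain ⟨-, -, hva'⟩ := hva
    obtain ⟨-, -, hvc'⟩ := hvc
    have h1 : inTL a v := hva'.resolve_left (hba v hv)
    have h2 : inTL c v := hvc'.resolve_left (hbc v hv)
    have hb2 : a.2 ≤ b.2 := by
      by_contra h
      exact hbb a ha ⟨hab, lt_of_not_ge h⟩
    exact ⟨hv, hb, Or.inr ⟨hbc'.trans h2.1, lt_of_lt_of_le h1.2 hb2⟩⟩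
end

section
/- For any two vertices u, v of a connected permutation graph, d(u,v) ≤ 2 if and only if the interval of u's bottom-boundary neighbors intersects the interval of v's bottom-boundary neighbors, or the interval of u's top-boundary neighbors intersects the interval of v's top-boundary neighbors. -/
lemma inTL_trans {p q r : ℝ × ℝ} (h1 : inTL p q) (h2 : inTL q r) : inTL p r :=
  ⟨h1.1.trans h2.1, h2.2.trans h1.2⟩

lemma top_common (S : Finset (ℝ × ℝ)) {u v : ℝ × ℝ} (hu : u ∈ S) (hv : v ∈ S)
    (h : ∃ w ∈ S, inTL w u ∧ inTL w v) :
    ∃ w ∈ S, onTop S w ∧ (pGraph S).Adj u w ∧ (pGraph S).Adj v w := by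
  classical
  obtain ⟨w, hwS, hwu, hwv⟩ := h
  have hne : (S.filter (fun q => inTL q u ∧ inTL q v)).Nonempty :=
    ⟨w, Finset.mem_filter.2 ⟨hwS, hwu, hwv⟩⟩
  obtain ⟨q, hqmem, hqmax⟩ := Finset.exists_max_image _ (fun p => p.2) hne
  rw [Finset.mem_filter] at hqmem
  obtain ⟨hqS, hqu, hqv⟩ := hqmem
  refine ⟨q, hqS, ?_, ⟨hu, hqS, Or.inr hqu⟩, ⟨hv, hqS, Or.inr hqv⟩⟩
  intro r hrS hrq
  have hmem : r ∈ S.filter (fun p => inTL p u ∧ inTL p v) :=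
    Finset.mem_filter.2 ⟨hrS, inTL_trans hrq hqu, inTL_trans hrq hqv⟩
  exact absurd (hqmax r hmem) (not_le.2 hrq.2)

lemma bot_common (S : Finset (ℝ × ℝ)) {u v : ℝ × ℝ} (hu : u ∈ S) (hv : v ∈ S)
    (h : ∃ w ∈ S, inTL u w ∧ inTL v w) :
    ∃ w ∈ S, onBottom S w ∧ (pGraph S).Adj u w ∧ (pGraph S).Adj v w := by
  classical
  obtain ⟨w, hwS, hwu, hwv⟩ := h
  have hne : (S.filter (fun q => inTL u q ∧ inTL v q)).Nonempty :=
    ⟨w, Finset.mem_filter.2 ⟨hwS, hwu, hwv⟩⟩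
  obtain ⟨q, hqmem, hqmin⟩ := Finset.exists_min_image _ (fun p => p.2) hne
  rw [Finset.mem_filter] at hqmem
  obtain ⟨hqS, hqu, hqv⟩ := hqmem
  refine ⟨q, hqS, ?_, ⟨hu, hqS, Or.inl hqu⟩, ⟨hv, hqS, Or.inl hqv⟩⟩
  intro r hrS hqr
  have hmem : r ∈ S.filter (fun p => inTL u p ∧ inTL v p) :=
    Finset.mem_filter.2 ⟨hrS, inTL_trans hqu hqr, inTL_trans hqv hqr⟩
  exact absurd (hqmin r hmem) (not_le.2 hqr.2)

lemma adj_common (S : Finset (ℝ × ℝ)) {u v : ℝ × ℝ} (hu : u ∈ S) (hv : v ∈ S)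
    (hunt : ¬ onTop S u) (hvnt : ¬ onTop S v) (hadj : (pGraph S).Adj u v) :
    (∃ w ∈ S, onBottom S w ∧ (pGraph S).Adj u w ∧ (pGraph S).Adj v w) ∨
      (∃ w ∈ S, onTop S w ∧ (pGraph S).Adj u w ∧ (pGraph S).Adj v w) := by
  rcases hadj.2.2 with h | h
  · -- inTL u v : v not on top gives q with inTL q v, then inTL q u? no: inTL q v, inTL u v...
    -- use u not on top: q with inTL q u, then inTL q v via inTL q u, inTL u v
    simp only [onTop, not_forall] at hunt
    obtain ⟨q, hqS, hq⟩ := hunt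
    rw [not_not] at hq
    exact Or.inr (top_common S hu hv ⟨q, hqS, hq, inTL_trans hq h⟩)
  · simp only [onTop, not_forall] at hvnt
    obtain ⟨q, hqS, hq⟩ := hvnt
    rw [not_not] at hq
    exact Or.inr (top_common S hu hv ⟨q, hqS, inTL_trans hq h, hq⟩)
/-- two vertices `u, v` are at distance at most 2 iff the intervals of
their bottom-boundary neighbours intersect or the intervals of their top-boundary
neighbours intersect (since the neighbour sets on each boundary are exactly these
intervals, this means: `u` and `v` have a common neighbour on one of the boundaries). -/
theorem stmt14 (S : Finset (ℝ × ℝ)) (hS : DistinctCoords S)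
    (hconn : ∀ p ∈ S, ∀ q ∈ S, (pGraph S).Reachable p q)
    (u v : ℝ × ℝ) (hu : u ∈ S) (hv : v ∈ S) (huv : u ≠ v)
    (hunb : ¬ onTop S u ∧ ¬ onBottom S u) (hvnb : ¬ onTop S v ∧ ¬ onBottom S v) :
    (pGraph S).dist u v ≤ 2 ↔
      (∃ w ∈ S, onBottom S w ∧ (pGraph S).Adj u w ∧ (pGraph S).Adj v w) ∨
      (∃ w ∈ S, onTop S w ∧ (pGraph S).Adj u w ∧ (pGraph S).Adj v w) := by
  constructor
  · intro hd
    obtain ⟨p, hp⟩ := (hconn u hu v hv).exists_walk_length_eq_dist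
    rw [← hp] at hd
    cases p with
    | nil => exact absurd rfl huv
    | cons h1 p' =>
      rename_i w
      cases p' with
      | nil => exact adj_common S hu hv hunb.1 hvnb.1 h1
      | cons h2 p'' =>
        cases p'' with
        | nil =>
          have h2' := h2.symm
          rcases h1.2.2 with huw | hwu
          · rcases h2'.2.2 with hvw | hwv
            · exact Or.inl (bot_common S hu hv ⟨w, h1.2.1, huw, hvw⟩)
            · exact adj_common S hu hv hunb.1 hvnb.1 ⟨hu, hv, Or.inl (inTL_trans huw hwv)⟩
          · rcases h2'.2.2 with hvw | hwv
            · exact adj_common S hu hv hunb.1 hvnb.1 ⟨hu, hv, Or.inr (inTL_trans hvw hwu)⟩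
            · exact Or.inr (top_common S hu hv ⟨w, h1.2.1, hwu, hwv⟩)
        | cons h3 p''' => simp [SimpleGraph.Walk.length_cons] at hd
  · rintro (⟨w, hwS, -, h1, h2⟩ | ⟨w, hwS, -, h1, h2⟩) <;>
    · have := (pGraph S).dist_le (SimpleGraph.Walk.cons h1 (SimpleGraph.Walk.cons h2.symm SimpleGraph.Walk.nil))
      simpa using this
end

section
/- For any two non-boundary vertices u, v of a connected permutation graph with d(u,v) > 2 and u_x < v_x, there exists a shortest path from u to v whose second vertex is Blast(u) or Tlast(u) and whose penultimate vertex is Bfirst(v) or Tfirst(v). -/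
private lemma myTriangle {V : Type*} {G : SimpleGraph V} {a b c : V}
    (h1 : G.Reachable a b) (h2 : G.Reachable b c) :
    G.dist a c ≤ G.dist a b + G.dist b c := by
  obtain ⟨p, hp⟩ := h1.exists_walk_length_eq_dist
  obtain ⟨q, hq⟩ := h2.exists_walk_length_eq_dist
  rw [← hp, ← hq, ← SimpleGraph.Walk.length_append]
  exact SimpleGraph.dist_le _

private lemma chainWalk {V : Type*} {G : SimpleGraph V} (q : ℕ → V) :
    ∀ n, (∀ i < n, G.Adj (q i) (q (i+1))) → ∃ W : G.Walk (q 0) (q n), W.length ≤ n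
  | 0, _ => ⟨SimpleGraph.Walk.nil, by simp⟩
  | (n+1), h => by
      obtain ⟨W, hW⟩ := chainWalk q n (fun i hi => h i (by omega))
      refine ⟨W.concat (h n (by omega)), ?_⟩
      rw [SimpleGraph.Walk.length_concat]; omega

private lemma chainDistLe {V : Type*} {G : SimpleGraph V} (q : ℕ → V) (n : ℕ)
    (h : ∀ i < n, G.Adj (q i) (q (i+1))) : G.dist (q 0) (q n) ≤ n := by
  obtain ⟨W, hW⟩ := chainWalk q n h
  exact le_trans (SimpleGraph.dist_le W) hW

/-- Trichotomy: two distinct non-adjacent points of `S` are in each other's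
lower-left and upper-right quadrants. -/
private lemma tri {S : Finset (ℝ × ℝ)} (hS : DistinctCoords S) {p q : ℝ × ℝ}
    (hp : p ∈ S) (hq : q ∈ S) (hne : p ≠ q) (hnadj : ¬ (pGraph S).Adj p q) :
    (p.1 < q.1 ∧ p.2 < q.2) ∨ (q.1 < p.1 ∧ q.2 < p.2) := by
  obtain ⟨h1, h2⟩ := hS p hp q hq hne
  rcases lt_or_gt_of_ne h1 with hx | hx <;> rcases lt_or_gt_of_ne h2 with hy | hy
  · exact Or.inl ⟨hx, hy⟩
  · exact absurd ⟨hp, hq, Or.inl ⟨hx, hy⟩⟩ hnadj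
  · exact absurd ⟨hp, hq, Or.inr ⟨hx, hy⟩⟩ hnadj
  · exact Or.inr ⟨hx, hy⟩

/-- Separation lemma, version bounding `dist c b`:
any walk from the lower-left quadrant of `c` to the upper-right quadrant of `c`
passes through the closed neighbourhood of `c`. -/
private lemma sep1 {S : Finset (ℝ × ℝ)} (hS : DistinctCoords S) {c : ℝ × ℝ} (hc : c ∈ S) :
    ∀ {a b : ℝ × ℝ} (W : (pGraph S).Walk a b),
      a.1 < c.1 → a.2 < c.2 → c.1 < b.1 → c.2 < b.2 →
      (pGraph S).dist c b ≤ W.length + 1 := by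
  intro a b W
  induction W with
  | nil => intro h1 _ h3 _; exact absurd (h1.trans h3) (lt_irrefl _)
  | @cons x y z h p ih =>
    intro h1 h2 h3 h4
    rw [SimpleGraph.Walk.length_cons]
    by_cases hac : y = c
    · subst hac
      have := SimpleGraph.dist_le p
      omega
    by_cases hca : (pGraph S).Adj c y
    · have htr := myTriangle hca.reachable p.reachable
      have hd1 : (pGraph S).dist c y = 1 := SimpleGraph.dist_eq_one_iff_adj.mpr hca
      have := SimpleGraph.dist_le p
      omega
    · rcases tri hS h.2.1 hc hac (fun h' => hca h'.symm) with ⟨hl1, hl2⟩ | ⟨hr1, hr2⟩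
      · have := ih hl1 hl2 h3 h4; omega
      · exfalso
        rcases h.2.2 with ⟨q1, q2⟩ | ⟨q1, q2⟩
        · linarith
        · linarith

/-- Separation lemma, version bounding `dist a c`. -/
private lemma sep2 {S : Finset (ℝ × ℝ)} (hS : DistinctCoords S) {c : ℝ × ℝ} (hc : c ∈ S)
    (hconn : ∀ p ∈ S, ∀ q ∈ S, (pGraph S).Reachable p q) :
    ∀ {a b : ℝ × ℝ} (W : (pGraph S).Walk a b),
      a.1 < c.1 → a.2 < c.2 → c.1 < b.1 → c.2 < b.2 →
      (pGraph S).dist a c ≤ W.length + 1 := by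
  intro a b W
  induction W with
  | nil => intro h1 _ h3 _; exact absurd (h1.trans h3) (lt_irrefl _)
  | @cons x y z h p ih =>
    intro h1 h2 h3 h4
    rw [SimpleGraph.Walk.length_cons]
    by_cases hac : y = c
    · subst hac
      have := SimpleGraph.dist_eq_one_iff_adj.mpr h
      omega
    by_cases hca : (pGraph S).Adj c y
    · have htr := myTriangle h.reachable hca.symm.reachable
      have hd1 : (pGraph S).dist x y = 1 := SimpleGraph.dist_eq_one_iff_adj.mpr h
      have hd2 : (pGraph S).dist y c = 1 := SimpleGraph.dist_eq_one_iff_adj.mpr hca.symm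
      have hlen : 1 ≤ p.length + 1 := by omega
      omega
    · rcases tri hS h.2.1 hc hac (fun h' => hca h'.symm) with ⟨hl1, hl2⟩ | ⟨hr1, hr2⟩
      · have htr := myTriangle h.reachable (hconn y h.2.1 c hc)
        have hd1 : (pGraph S).dist x y = 1 := SimpleGraph.dist_eq_one_iff_adj.mpr h
        have := ih hl1 hl2 h3 h4
        omega
      · exfalso
        rcases h.2.2 with ⟨q1, q2⟩ | ⟨q1, q2⟩
        · linarith
        · linarith

/-- Domination at `u`: if `u ~ w1 ~ w2` and `w2` is in the upper-right quadrant of `u`,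
then the extreme boundary neighbours `Blast u` or `Tlast u` are adjacent to `w2`. -/
private lemma domU {S : Finset (ℝ × ℝ)} (hS : DistinctCoords S) {u w1 w2 blu tlu : ℝ × ℝ}
    (hu : u ∈ S)
    (h1 : (pGraph S).Adj u w1) (h12 : (pGraph S).Adj w1 w2)
    (hx : u.1 < w2.1) (hy : u.2 < w2.2)
    (hblu : blu ∈ S ∧ onBottom S blu ∧ (pGraph S).Adj u blu ∧
      ∀ q ∈ S, onBottom S q → (pGraph S).Adj u q → q.1 ≤ blu.1)
    (htlu : tlu ∈ S ∧ onTop S tlu ∧ (pGraph S).Adj u tlu ∧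
      ∀ q ∈ S, onTop S q → (pGraph S).Adj u q → q.1 ≤ tlu.1) :
    (pGraph S).Adj blu w2 ∨ (pGraph S).Adj tlu w2 := by
  classical
  obtain ⟨hbS, hbB, hbAdj, hbMax⟩ := hblu
  obtain ⟨htS, htT, htAdj, htMax⟩ := htlu
  have hw1S : w1 ∈ S := h1.2.1
  have hw2S : w2 ∈ S := h12.2.1
  rcases h1.2.2 with hBR | hTL
  · -- hBR : inTL u w1, i.e. w1 is bottom-right of u; use blu
    left
    have h12' : inTL w2 w1 := by
      rcases h12.2.2 with h | h
      · exfalso; have := h.2; have := hBR.2; linarith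
      · exact h
    set A := S.filter (fun p => p = w1 ∨ inTL w1 p) with hA
    have hw1A : w1 ∈ A := Finset.mem_filter.mpr ⟨hw1S, Or.inl rfl⟩
    obtain ⟨p, hpA, hpmin⟩ := A.exists_min_image (fun p => p.2) ⟨w1, hw1A⟩
    have hpS : p ∈ S := (Finset.mem_filter.mp hpA).1
    have hp1 : w1.1 ≤ p.1 := by
      rcases (Finset.mem_filter.mp hpA).2 with h | h
      · rw [h]
      · exact le_of_lt h.1
    have hp2 : p.2 ≤ w1.2 := hpmin w1 hw1A
    have hpB : onBottom S p := by
      intro q hq hq'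
      have hqA : q ∈ A := Finset.mem_filter.mpr
        ⟨hq, Or.inr ⟨lt_of_le_of_lt hp1 hq'.1, lt_of_lt_of_le hq'.2 hp2⟩⟩
      exact absurd (hpmin q hqA) (not_le.mpr hq'.2)
    have hpu : (pGraph S).Adj u p :=
      ⟨hu, hpS, Or.inl ⟨by linarith [hBR.1], by linarith [hBR.2]⟩⟩
    have hble : p.1 ≤ blu.1 := hbMax p hpS hpB hpu
    have hblu2 : blu.2 < u.2 := by
      rcases hbAdj.2.2 with h | h
      · exact h.2
      · exact absurd h (hbB u hu)
    exact ⟨hbS, hw2S, Or.inr ⟨by linarith [h12'.1], by linarith⟩⟩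
  · -- hTL : inTL w1 u, i.e. w1 is top-left of u; use tlu
    right
    have h12' : inTL w1 w2 := by
      rcases h12.2.2 with h | h
      · exact h
      · exfalso; have := h.1; have := hTL.1; linarith
    set A := S.filter (fun p => p = w1 ∨ inTL p w1) with hA
    have hw1A : w1 ∈ A := Finset.mem_filter.mpr ⟨hw1S, Or.inl rfl⟩
    obtain ⟨p, hpA, hpmax⟩ := A.exists_max_image (fun p => p.2) ⟨w1, hw1A⟩
    have hpS : p ∈ S := (Finset.mem_filter.mp hpA).1
    have hp1 : p.1 ≤ w1.1 := by
      rcases (Finset.mem_filter.mp hpA).2 with h | h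
      · rw [h]
      · exact le_of_lt h.1
    have hp2 : w1.2 ≤ p.2 := hpmax w1 hw1A
    have hpT : onTop S p := by
      intro q hq hq'
      have hqA : q ∈ A := Finset.mem_filter.mpr
        ⟨hq, Or.inr ⟨lt_of_lt_of_le hq'.1 hp1, lt_of_le_of_lt hp2 hq'.2⟩⟩
      exact absurd (hpmax q hqA) (not_le.mpr hq'.2)
    have hpu : (pGraph S).Adj u p :=
      ⟨hu, hpS, Or.inr ⟨by linarith [hTL.1], by linarith [hTL.2]⟩⟩
    have htle : p.1 ≤ tlu.1 := htMax p hpS hpT hpu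
    have htlu2 : p.2 ≤ tlu.2 := by
      by_cases he : tlu = p
      · rw [he]
      · have hne1 : tlu.1 ≠ p.1 := (hS tlu htS p hpS he).1
        have h1' : p.1 < tlu.1 := lt_of_le_of_ne htle (fun h => hne1 h.symm)
        by_contra hcon
        push_neg at hcon
        exact htT p hpS ⟨h1', hcon⟩
    have htlu1 : tlu.1 < u.1 := by
      rcases htAdj.2.2 with h | h
      · exact absurd h (htT u hu)
      · exact h.1
    refine ⟨htS, hw2S, Or.inl ⟨by linarith, ?_⟩⟩
    have := h12'.2
    linarith

/-- Domination at `v`: if `v ~ w ~ z` and `z` is in the lower-left quadrant of `v`,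
then the extreme boundary neighbours `Bfirst v` or `Tfirst v` are adjacent to `z`. -/
private lemma domV {S : Finset (ℝ × ℝ)} (hS : DistinctCoords S) {v w z bfv tfv : ℝ × ℝ}
    (hv : v ∈ S)
    (h1 : (pGraph S).Adj v w) (h1z : (pGraph S).Adj w z)
    (hx : z.1 < v.1) (hy : z.2 < v.2)
    (hbfv : bfv ∈ S ∧ onBottom S bfv ∧ (pGraph S).Adj v bfv ∧
      ∀ q ∈ S, onBottom S q → (pGraph S).Adj v q → bfv.1 ≤ q.1)
    (htfv : tfv ∈ S ∧ onTop S tfv ∧ (pGraph S).Adj v tfv ∧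
      ∀ q ∈ S, onTop S q → (pGraph S).Adj v q → tfv.1 ≤ q.1) :
    (pGraph S).Adj bfv z ∨ (pGraph S).Adj tfv z := by
  classical
  obtain ⟨hbS, hbB, hbAdj, hbMin⟩ := hbfv
  obtain ⟨htS, htT, htAdj, htMin⟩ := htfv
  have hwS : w ∈ S := h1.2.1
  have hzS : z ∈ S := h1z.2.1
  rcases h1.2.2 with hBR | hTL
  · -- hBR : inTL v w, i.e. w is bottom-right of v; use bfv
    left
    have h1z' : inTL z w := by
      rcases h1z.2.2 with h | h
      · exfalso; have := h.1; have := hBR.1; linarith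
      · exact h
    set A := S.filter (fun p => p = w ∨ inTL w p) with hA
    have hwA : w ∈ A := Finset.mem_filter.mpr ⟨hwS, Or.inl rfl⟩
    obtain ⟨p, hpA, hpmin⟩ := A.exists_min_image (fun p => p.2) ⟨w, hwA⟩
    have hpS : p ∈ S := (Finset.mem_filter.mp hpA).1
    have hp1 : w.1 ≤ p.1 := by
      rcases (Finset.mem_filter.mp hpA).2 with h | h
      · rw [h]
      · exact le_of_lt h.1
    have hp2 : p.2 ≤ w.2 := hpmin w hwA
    have hpB : onBottom S p := by
      intro q hq hq'
      have hqA : q ∈ A := Finset.mem_filter.mpr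
        ⟨hq, Or.inr ⟨lt_of_le_of_lt hp1 hq'.1, lt_of_lt_of_le hq'.2 hp2⟩⟩
      exact absurd (hpmin q hqA) (not_le.mpr hq'.2)
    have hpv : (pGraph S).Adj v p :=
      ⟨hv, hpS, Or.inl ⟨by linarith [hBR.1], by linarith [hBR.2]⟩⟩
    have hble : bfv.1 ≤ p.1 := hbMin p hpS hpB hpv
    have hbfv2 : bfv.2 ≤ p.2 := by
      by_cases he : bfv = p
      · rw [he]
      · have hne1 : bfv.1 ≠ p.1 := (hS bfv hbS p hpS he).1
        have h1' : bfv.1 < p.1 := lt_of_le_of_ne hble hne1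
        by_contra hcon
        push_neg at hcon
        exact hbB p hpS ⟨h1', hcon⟩
    have hbfv1 : v.1 < bfv.1 := by
      rcases hbAdj.2.2 with h | h
      · exact h.1
      · exact absurd h (hbB v hv)
    refine ⟨hbS, hzS, Or.inr ⟨by linarith, ?_⟩⟩
    have := h1z'.2
    linarith
  · -- hTL : inTL w v, i.e. w is top-left of v; use tfv
    right
    have h1z' : inTL w z := by
      rcases h1z.2.2 with h | h
      · exact h
      · exfalso; have := h.2; have := hTL.2; linarith
    set A := S.filter (fun p => p = w ∨ inTL p w) with hA
    have hwA : w ∈ A := Finset.mem_filter.mpr ⟨hwS, Or.inl rfl⟩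
    obtain ⟨p, hpA, hpmax⟩ := A.exists_max_image (fun p => p.2) ⟨w, hwA⟩
    have hpS : p ∈ S := (Finset.mem_filter.mp hpA).1
    have hp1 : p.1 ≤ w.1 := by
      rcases (Finset.mem_filter.mp hpA).2 with h | h
      · rw [h]
      · exact le_of_lt h.1
    have hp2 : w.2 ≤ p.2 := hpmax w hwA
    have hpT : onTop S p := by
      intro q hq hq'
      have hqA : q ∈ A := Finset.mem_filter.mpr
        ⟨hq, Or.inr ⟨lt_of_lt_of_le hq'.1 hp1, lt_of_le_of_lt hp2 hq'.2⟩⟩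
      exact absurd (hpmax q hqA) (not_le.mpr hq'.2)
    have hpv : (pGraph S).Adj v p :=
      ⟨hv, hpS, Or.inr ⟨by linarith [hTL.1], by linarith [hTL.2]⟩⟩
    have htle : tfv.1 ≤ p.1 := htMin p hpS hpT hpv
    have htfv2 : v.2 < tfv.2 := by
      rcases htAdj.2.2 with h | h
      · exact absurd h (htT v hv)
      · exact h.2
    refine ⟨htS, hzS, Or.inl ⟨?_, by linarith⟩⟩
    have := h1z'.1
    linarith

/-- for non-boundary vertices `u, v` with `d(u,v) > 2` and `u.1 < v.1`,
there is a shortest path from `u` to `v` whose second vertex is `Blast u` or `Tlast u`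
and whose penultimate vertex is `Bfirst v` or `Tfirst v` (the extreme boundary
neighbours, characterised below by maximality/minimality in boundary order). -/
theorem stmt15 (S : Finset (ℝ × ℝ)) (hS : DistinctCoords S)
    (hconn : ∀ p ∈ S, ∀ q ∈ S, (pGraph S).Reachable p q)
    (u v : ℝ × ℝ) (hu : u ∈ S) (hv : v ∈ S)
    (hunb : ¬ onTop S u ∧ ¬ onBottom S u) (hvnb : ¬ onTop S v ∧ ¬ onBottom S v)
    (hx : u.1 < v.1)
    (d : ℕ) (hd : (pGraph S).dist u v = d) (h3 : 2 < d)
    (blu tlu bfv tfv : ℝ × ℝ)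
    (hblu : blu ∈ S ∧ onBottom S blu ∧ (pGraph S).Adj u blu ∧
      ∀ q ∈ S, onBottom S q → (pGraph S).Adj u q → q.1 ≤ blu.1)
    (htlu : tlu ∈ S ∧ onTop S tlu ∧ (pGraph S).Adj u tlu ∧
      ∀ q ∈ S, onTop S q → (pGraph S).Adj u q → q.1 ≤ tlu.1)
    (hbfv : bfv ∈ S ∧ onBottom S bfv ∧ (pGraph S).Adj v bfv ∧
      ∀ q ∈ S, onBottom S q → (pGraph S).Adj v q → bfv.1 ≤ q.1)
    (htfv : tfv ∈ S ∧ onTop S tfv ∧ (pGraph S).Adj v tfv ∧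
      ∀ q ∈ S, onTop S q → (pGraph S).Adj v q → tfv.1 ≤ q.1) :
    ∃ q : ℕ → ℝ × ℝ, q 0 = u ∧ q d = v ∧
      (∀ i < d, (pGraph S).Adj (q i) (q (i + 1))) ∧
      (q 1 = blu ∨ q 1 = tlu) ∧ (q (d - 1) = bfv ∨ q (d - 1) = tfv) := by
  classical
  have hreach : (pGraph S).Reachable u v := hconn u hu v hv
  obtain ⟨W, hWlen⟩ := hreach.exists_walk_length_eq_dist
  rw [hd] at hWlen
  set w : ℕ → ℝ × ℝ := W.getVert with hwdef
  have hw0 : w 0 = u := W.getVert_zero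
  have hwd : w d = v := by rw [hwdef, ← hWlen]; exact W.getVert_length
  have hadjw : ∀ i < d, (pGraph S).Adj (w i) (w (i+1)) := by
    intro i hi
    exact W.adj_getVert_succ (by omega)
  -- basic facts about u,v
  have hneuv : u ≠ v := by
    intro h; rw [h, SimpleGraph.dist_self] at hd; omega
  have hnadjuv : ¬ (pGraph S).Adj u v := by
    intro h
    have := SimpleGraph.dist_eq_one_iff_adj.mpr h
    omega
  have huv2 : u.2 < v.2 := by
    rcases tri hS hu hv hneuv hnadjuv with ⟨_, h⟩ | ⟨h, _⟩
    · exact h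
    · linarith
  -- the third vertex w 2
  have hw2S : w 2 ∈ S := (hadjw 1 (by omega)).2.1
  have hsuffix : (pGraph S).dist (w 2) v ≤ d - 2 := by
    have hh : ∀ i < d - 2,
        (pGraph S).Adj ((fun k => w (2+k)) i) ((fun k => w (2+k)) (i+1)) := by
      intro i hi
      have he : 2 + (i+1) = (2+i) + 1 := by omega
      simp only [he]
      exact hadjw (2+i) (by omega)
    have := chainDistLe (fun k => w (2+k)) (d-2) hh
    simp only [show 2 + (d-2) = d by omega, Nat.add_zero, hwd] at this
    exact this
  have htriu : (pGraph S).dist u v ≤ (pGraph S).dist u (w 2) + (pGraph S).dist (w 2) v :=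
    myTriangle (hconn u hu _ hw2S) (hconn _ hw2S v hv)
  have hdu2 : 2 ≤ (pGraph S).dist u (w 2) := by omega
  have hneu2 : u ≠ w 2 := by
    intro h; rw [← h, SimpleGraph.dist_self] at hdu2; omega
  have hnadju2 : ¬ (pGraph S).Adj u (w 2) := by
    intro h
    have := SimpleGraph.dist_eq_one_iff_adj.mpr h
    omega
  have hq2 : u.1 < (w 2).1 ∧ u.2 < (w 2).2 := by
    rcases tri hS hu hw2S hneu2 hnadju2 with h | ⟨h1', h2'⟩
    · exact h
    · exfalso
      obtain ⟨W2, hW2⟩ := (hconn _ hw2S v hv).exists_walk_length_eq_dist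
      have hsep := sep1 hS hu W2 h1' h2' hx huv2
      rw [hW2] at hsep
      omega
  have hadju1 : (pGraph S).Adj u (w 1) := by
    have := hadjw 0 (by omega)
    rwa [hw0] at this
  have hdom := domU hS hu hadju1 (hadjw 1 (by omega)) hq2.1 hq2.2 hblu htlu
  obtain ⟨x1, hx1eq, hux1, hx1w2⟩ :
      ∃ x1, (x1 = blu ∨ x1 = tlu) ∧ (pGraph S).Adj u x1 ∧ (pGraph S).Adj x1 (w 2) := by
    rcases hdom with h | h
    · exact ⟨blu, Or.inl rfl, hblu.2.2.1, h⟩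
    · exact ⟨tlu, Or.inr rfl, htlu.2.2.1, h⟩
  -- the modified walk w'
  set w' : ℕ → ℝ × ℝ := fun i => if i = 1 then x1 else w i with hw'def
  have hw'ne : ∀ i : ℕ, i ≠ 1 → w' i = w i := fun i h => if_neg h
  have hw'1 : w' 1 = x1 := if_pos rfl
  have hw'0 : w' 0 = u := by rw [hw'ne 0 (by omega)]; exact hw0
  have hw'd : w' d = v := by rw [hw'ne d (by omega)]; exact hwd
  have hadjw' : ∀ i < d, (pGraph S).Adj (w' i) (w' (i+1)) := by
    intro i hi
    by_cases h0 : i = 0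
    · subst h0
      rw [hw'0, show (0:ℕ)+1 = 1 from rfl, hw'1]
      exact hux1
    by_cases h1 : i = 1
    · subst h1
      rw [hw'1, hw'ne 2 (by omega)]
      exact hx1w2
    · rw [hw'ne i h1, hw'ne (i+1) (by omega)]
      exact hadjw i hi
  -- the vertex z = w' (d-2)
  have hzS : w' (d-2) ∈ S := (hadjw' (d-2) (by omega)).1
  have hprefix : (pGraph S).dist u (w' (d-2)) ≤ d - 2 := by
    have := chainDistLe w' (d-2) (fun i hi => hadjw' i (by omega))
    rwa [hw'0] at this
  have htriv : (pGraph S).dist u v ≤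
      (pGraph S).dist u (w' (d-2)) + (pGraph S).dist (w' (d-2)) v :=
    myTriangle (hconn u hu _ hzS) (hconn _ hzS v hv)
  have hdz2 : 2 ≤ (pGraph S).dist (w' (d-2)) v := by omega
  have hnezv : w' (d-2) ≠ v := by
    intro h; rw [h, SimpleGraph.dist_self] at hdz2; omega
  have hnadjzv : ¬ (pGraph S).Adj (w' (d-2)) v := by
    intro h
    have := SimpleGraph.dist_eq_one_iff_adj.mpr h
    omega
  have hqz : (w' (d-2)).1 < v.1 ∧ (w' (d-2)).2 < v.2 := by
    rcases tri hS hzS hv hnezv hnadjzv with h | ⟨h1', h2'⟩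
    · exact h
    · exfalso
      obtain ⟨W3, hW3⟩ := (hconn u hu _ hzS).exists_walk_length_eq_dist
      have hsep := sep2 hS hv hconn W3 hx huv2 h1' h2'
      rw [hW3] at hsep
      omega
  have hadjzd1 : (pGraph S).Adj (w' (d-2)) (w' (d-1)) := by
    have h := hadjw' (d-2) (by omega)
    rwa [show d-2+1 = d-1 by omega] at h
  have hadjd1v : (pGraph S).Adj (w' (d-1)) v := by
    have h := hadjw' (d-1) (by omega)
    rwa [show d-1+1 = d by omega, hw'd] at h
  have hdomv := domV hS hv hadjd1v.symm hadjzd1.symm hqz.1 hqz.2 hbfv htfv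
  obtain ⟨y, hyeq, hvy, hyz⟩ :
      ∃ y, (y = bfv ∨ y = tfv) ∧ (pGraph S).Adj v y ∧ (pGraph S).Adj y (w' (d-2)) := by
    rcases hdomv with h | h
    · exact ⟨bfv, Or.inl rfl, hbfv.2.2.1, h⟩
    · exact ⟨tfv, Or.inr rfl, htfv.2.2.1, h⟩
  set q0 : ℕ → ℝ × ℝ := fun i => if i = d - 1 then y else w' i with hq0def
  have hq0ne : ∀ i : ℕ, i ≠ d - 1 → q0 i = w' i := fun i h => if_neg h
  have hq0eq : q0 (d-1) = y := if_pos rfl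
  refine ⟨q0, ?_, ?_, ?_, ?_, ?_⟩
  · rw [hq0ne 0 (by omega)]; exact hw'0
  · rw [hq0ne d (by omega)]; exact hw'd
  · intro i hi
    by_cases hi2 : i = d - 2
    · subst hi2
      rw [hq0ne (d-2) (by omega), show d-2+1 = d-1 by omega, hq0eq]
      exact hyz.symm
    by_cases hi1 : i = d - 1
    · subst hi1
      rw [hq0eq, hq0ne (d-1+1) (by omega), show d-1+1 = d by omega, hw'd]
      exact hvy.symm
    · rw [hq0ne i hi1, hq0ne (i+1) (by omega)]
      exact hadjw' i hi
  · rw [hq0ne 1 (by omega), hw'1]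
    exact hx1eq
  · rw [hq0eq]
    exact hyeq
end

section
/- Suppose a non-boundary vertex v of a connected permutation graph is adjacent to exactly one layer on the bottom boundary and one layer on the top boundary, with the bottom layer number smaller than the top layer number. Then Blast(v) is the last point (maximal in boundary order) of its layer. -/
/-- suppose a non-boundary vertex `v` is adjacent to boundary points of
exactly one layer `kb` on the bottom boundary and exactly one layer `kt` on the top
boundary, with `kb < kt` (the fourth layout). Then `Blast(v)`, the maximal
bottom-boundary neighbour of `v`, is the last point of its layer. -/
theorem stmt18 (S : Finset (ℝ × ℝ)) (hS : DistinctCoords S)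
    (hconn : ∀ p ∈ S, ∀ q ∈ S, (pGraph S).Reachable p q)
    (p₀ : ℝ × ℝ) (hp₀ : p₀ ∈ S) (hleft : ∀ q ∈ S, q ≠ p₀ → p₀.1 < q.1)
    (L : ℝ × ℝ → ℕ) (hL : ∀ w, L w = (pGraph S).dist p₀ w)
    (v : ℝ × ℝ) (hv : v ∈ S) (hvnb : ¬ onTop S v ∧ ¬ onBottom S v)
    (kb kt : ℕ) (hkbkt : kb < kt)
    (hbotlayer : ∀ w ∈ S, onBottom S w → (pGraph S).Adj v w → L w = kb)
    (hbotne : ∃ w ∈ S, onBottom S w ∧ (pGraph S).Adj v w)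
    (htoplayer : ∀ w ∈ S, onTop S w → (pGraph S).Adj v w → L w = kt)
    (htopne : ∃ w ∈ S, onTop S w ∧ (pGraph S).Adj v w)
    (bl : ℝ × ℝ)
    (hbl : bl ∈ S ∧ onBottom S bl ∧ (pGraph S).Adj v bl ∧
      ∀ q ∈ S, onBottom S q → (pGraph S).Adj v q → q.1 ≤ bl.1) :
    ∀ w ∈ S, onBottom S w → L w = L bl → w.1 ≤ bl.1 := by
  classical
  obtain ⟨hblS, hblB, hblA, hblmax⟩ := hbl
  set G := pGraph S with hG
  -- basic facts
  have hp₀top : onTop S p₀ := by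
    intro q hq ⟨hq1, _⟩
    rcases eq_or_ne q p₀ with rfl | hne
    · exact lt_irrefl _ hq1
    · exact absurd hq1 (not_lt.mpr (le_of_lt (hleft q hq hne)))
  have hvne : v ≠ p₀ := fun h => hvnb.1 (h ▸ hp₀top)
  have hp₀v : p₀.1 < v.1 := hleft v hv hvne
  -- adjacency bumps distance by at most one
  have adjDistLe : ∀ a b : ℝ × ℝ, a ∈ S → G.Adj a b → G.dist p₀ b ≤ G.dist p₀ a + 1 := by
    intro a b ha hab
    obtain ⟨p, hp⟩ := (hconn p₀ hp₀ a ha).exists_walk_length_eq_dist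
    calc G.dist p₀ b ≤ (p.concat hab).length := SimpleGraph.dist_le _
      _ = G.dist p₀ a + 1 := by rw [SimpleGraph.Walk.length_concat, hp]
  -- existence of a predecessor on a shortest path
  have pred : ∀ w : ℝ × ℝ, w ∈ S → w ≠ p₀ →
      ∃ u, G.Adj u w ∧ G.dist p₀ u + 1 ≤ G.dist p₀ w := by
    intro w hw hwne
    have hr : G.Reachable p₀ w := hconn p₀ hp₀ w hw
    obtain ⟨p, hp⟩ := hr.exists_walk_length_eq_dist
    obtain ⟨u, hadj, q, hq⟩ := SimpleGraph.Walk.exists_eq_cons_of_ne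
      hwne p.reverse
    refine ⟨u, hadj.symm, ?_⟩
    have hlen : q.length + 1 = G.dist p₀ w := by
      have := congrArg SimpleGraph.Walk.length hq
      simpa [SimpleGraph.Walk.length_reverse, hp] using this.symm
    have : G.dist p₀ u ≤ q.reverse.length := SimpleGraph.dist_le _
    rw [SimpleGraph.Walk.length_reverse] at this
    omega
  -- geometric description of v–bl adjacency
  have hvbl : v.1 < bl.1 ∧ bl.2 < v.2 := by
    rcases hblA.2.2 with h | h
    · exact h
    · exact absurd h (hblB v hv)
  -- L v ≥ kb
  have hLbl : (L bl : ℕ) = kb := hbotlayer bl hblS hblB hblA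
  have hLv : kb ≤ G.dist p₀ v := by
    obtain ⟨t, ht, httop, htadj⟩ := htopne
    have hLt : L t = kt := htoplayer t ht httop htadj
    have := adjDistLe v t hv htadj
    rw [hL] at hLt
    omega
  -- construction of a top-boundary point weakly above-left of a given point
  have topPt : ∀ u ∈ S, ∃ t ∈ S, onTop S t ∧ (t = u ∨ inTL t u) := by
    intro u hu
    have hne : (S.filter (fun q => q = u ∨ inTL q u)).Nonempty :=
      ⟨u, Finset.mem_filter.mpr ⟨hu, Or.inl rfl⟩⟩
    obtain ⟨t, htmem, htmax⟩ := Finset.exists_max_image _ (fun q => q.2) hne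
    obtain ⟨htS, htP⟩ := Finset.mem_filter.mp htmem
    refine ⟨t, htS, ?_, htP⟩
    intro r hr ⟨hr1, hr2⟩
    have hrP : r = u ∨ inTL r u := by
      rcases htP with rfl | ⟨ht1, ht2⟩
      · exact Or.inr ⟨hr1, hr2⟩
      · exact Or.inr ⟨lt_trans hr1 ht1, lt_trans ht2 hr2⟩
    have := htmax r (Finset.mem_filter.mpr ⟨hr, hrP⟩)
    exact absurd hr2 (not_lt.mpr this)
  -- no point strictly top-right of v has distance < kb
  have key : ∀ m : ℕ, ∀ z, z ∈ S → G.dist p₀ z = m → m < kb →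
      v.1 < z.1 → v.2 < z.2 → False := by
    intro m
    induction m using Nat.strong_induction_on with
    | _ m IH =>
      intro z hz hdz hmkb hx hy
      have hzne : z ≠ p₀ := by
        intro h; rw [h] at hx; exact lt_irrefl _ (lt_trans hp₀v hx)
      obtain ⟨u, hadj, hdu⟩ := pred z hz hzne
      have huS : u ∈ S := hadj.1
      have hune : u ≠ v := by
        intro h
        rw [h] at hdu
        omega
      have hnadj : ¬ G.Adj v u := by
        intro h
        have := adjDistLe u v huS h.symm
        omega
      obtain ⟨hxne, hyne⟩ := hS u huS v hv hune
      rcases lt_or_gt_of_ne hxne with hx1 | hx1 <;>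
        rcases lt_or_gt_of_ne hyne with hy1 | hy1
      · -- u bottom-left of v : impossible, u must be adjacent to z
        rcases hadj.2.2 with ⟨_, h2⟩ | ⟨h1, _⟩
        · exact absurd h2 (not_lt.mpr (le_of_lt (lt_trans hy1 hy)))
        · exact absurd h1 (not_lt.mpr (le_of_lt (lt_trans hx1 hx)))
      · -- u top-left of v : adjacent to v, contradiction
        exact hnadj ⟨hv, huS, Or.inr ⟨hx1, hy1⟩⟩
      · -- u bottom-right of v : adjacent to v, contradiction
        exact hnadj ⟨hv, huS, Or.inl ⟨hx1, hy1⟩⟩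
      · -- u top-right of v : induction
        exact IH (G.dist p₀ u) (by omega) u huS rfl (by omega) hx1 hy1
  -- main argument
  intro w hw hwB hwL
  by_contra hcon
  push_neg at hcon
  have hwdist : G.dist p₀ w = kb := by rw [← hL]; omega
  have hwv : v.1 < w.1 := lt_trans hvbl.1 hcon
  have hwnev : w ≠ v := by
    intro h; rw [h] at hwv; exact lt_irrefl _ hwv
  have hnadjw : ¬ G.Adj v w := fun h => absurd (hblmax w hw hwB h) (not_le.mpr hcon)
  have hwy : v.2 < w.2 := by
    obtain ⟨_, hyne⟩ := hS w hw v hv hwnev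
    rcases lt_or_gt_of_ne hyne with h | h
    · exact absurd (⟨hwv, h⟩ : inTL v w) (fun hh => hnadjw ⟨hv, hw, Or.inl hh⟩)
    · exact h
  have hwnep : w ≠ p₀ := by
    intro h; rw [h] at hwv; exact lt_irrefl _ (lt_trans hp₀v hwv)
  obtain ⟨u, hadj, hdu⟩ := pred w hw hwnep
  have huS : u ∈ S := hadj.1
  rw [hwdist] at hdu
  -- orientation: u is top-left of w
  have huw : u.1 < w.1 ∧ w.2 < u.2 := by
    rcases hadj.2.2 with h | h
    · exact h
    · exact absurd h (hwB u huS)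
  have huy : v.2 < u.2 := lt_trans hwy huw.2
  have hune : u ≠ v := by
    intro h; rw [h] at huy; exact lt_irrefl _ huy
  obtain ⟨hxne, _⟩ := hS u huS v hv hune
  rcases lt_or_gt_of_ne hxne with hx1 | hx1
  · -- u strictly top-left of v : find top-boundary point above-left, contradiction
    obtain ⟨t, htS, httop, htP⟩ := topPt u huS
    have htv : inTL t v := by
      rcases htP with rfl | ⟨h1, h2⟩
      · exact ⟨hx1, huy⟩
      · exact ⟨lt_trans h1 hx1, lt_trans huy h2⟩
    have htadj : G.Adj v t := ⟨hv, htS, Or.inr htv⟩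
    have hLt : L t = kt := htoplayer t htS httop htadj
    have hdt : G.dist p₀ t ≤ kb := by
      rcases htP with rfl | htl
      · omega
      · have := adjDistLe u t huS ⟨huS, htS, Or.inr htl⟩
        omega
    rw [hL] at hLt
    omega
  · -- u strictly top-right of v : contradiction by key
    exact key (G.dist p₀ u) u huS rfl (by omega) hx1 huy
end
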